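/- arXiv:2407.09764 — 2 statements merged into one kernel-verified Lean document; each statement's English description precedes it below -/
import Mathlib

section
/- Let F be an algebraically closed field of characteristic p > 2, let m ≥ 1, and let λ = (λ_1, …, λ_{2m+1}) ∈ F^{2m+1}. Consider the subspace D_λ of derivations ψ of h_m satisfying ψ(g^{[p]}) = [⋯[[ψ(g),g],g],…,g] ((p−1)-fold right bracketing with g) for all g ∈ h_m; this subspace contains all inner derivations. Then the quotient space D_λ / Inn(h_m) (which is the restricted cohomology H¹_*(h_m^λ, h_m^λ)) has dimension 2m² + m + 1 if λ = 0, and dimension 2m² + m if λ ≠ 0. -/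
namespace HeisAux

variable {F : Type*} [Field F] {m : ℕ} {L : Type*} [LieRing L] [LieAlgebra F L]

/-- index type: X-part, Y-part, Z -/
abbrev SIdx (m : ℕ) := (Fin m ⊕ Fin m) ⊕ Fin 1

lemma sum_lie' {ι : Type*} (s : Finset ι) (f : ι → L) (y : L) :
    ⁅∑ i ∈ s, f i, y⁆ = ∑ i ∈ s, ⁅f i, y⁆ := by
  classical
  induction s using Finset.induction with
  | empty => simp
  | insert _ _ h ih => simp [Finset.sum_insert h, add_lie, ih]

lemma lie_sum' {ι : Type*} (s : Finset ι) (f : ι → L) (y : L) :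
    ⁅y, ∑ i ∈ s, f i⁆ = ∑ i ∈ s, ⁅y, f i⁆ := by
  classical
  induction s using Finset.induction with
  | empty => simp
  | insert _ _ h ih => simp [Finset.sum_insert h, lie_add, ih]

section basis
variable {ι : Type*} [Fintype ι] (d : Module.Basis ι F L)

lemma lie_expand (u v : L) :
    ⁅u, v⁆ = ∑ s, ∑ t, (d.repr u s * d.repr v t) • ⁅d s, d t⁆ := by
  conv_lhs => rw [← d.sum_repr u, ← d.sum_repr v]
  simp only [sum_lie', lie_sum', smul_lie, lie_smul, smul_smul, Finset.smul_sum]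
  rw [Finset.sum_comm]
  exact Finset.sum_congr rfl fun s _ => Finset.sum_congr rfl fun t _ => by rw [mul_comm]

lemma lie_single (u : L) (t : ι) :
    ⁅u, d t⁆ = ∑ s, d.repr u s • ⁅d s, d t⁆ := by
  conv_lhs => rw [← d.sum_repr u]
  rw [sum_lie']; simp only [smul_lie]

lemma leibniz_of_basis (f : L →ₗ[F] L)
    (h : ∀ s t, f ⁅d s, d t⁆ = ⁅d s, f (d t)⁆ - ⁅d t, f (d s)⁆) (u v : L) :
    f ⁅u, v⁆ = ⁅u, f v⁆ - ⁅v, f u⁆ := by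
  conv_lhs => rw [← d.sum_repr u, ← d.sum_repr v]
  conv_rhs => rw [← d.sum_repr u, ← d.sum_repr v]
  simp only [lie_sum', sum_lie', lie_smul, smul_lie, map_sum, map_smul, h, smul_sub,
    Finset.sum_sub_distrib, smul_smul]
  congr 1
  simp only [Finset.smul_sum, smul_smul]
  rw [Finset.sum_comm]
  exact Finset.sum_congr rfl fun s _ => Finset.sum_congr rfl fun t _ => by rw [mul_comm]

end basis


section heis
variable (c : Module.Basis (SIdx m) F L)

/-- Structure-constant hypotheses for a Heisenberg basis. -/
structure IsHeis (c : Module.Basis (SIdx m) F L) : Prop where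
  hxy : ∀ a b : Fin m, ⁅c (.inl (.inl a)), c (.inl (.inr b))⁆ =
    if a = b then c (.inr 0) else 0
  hxx : ∀ a b : Fin m, ⁅c (.inl (.inl a)), c (.inl (.inl b))⁆ = 0
  hyy : ∀ a b : Fin m, ⁅c (.inl (.inr a)), c (.inl (.inr b))⁆ = 0
  hz : ∀ s, ⁅c (.inr 0), c s⁆ = 0

namespace IsHeis

variable {c} (hc : IsHeis c)
include hc

lemma hyx (a b : Fin m) : ⁅c (.inl (.inr a)), c (.inl (.inl b))⁆ =
    if b = a then -c (.inr 0) else 0 := by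
  rw [← lie_skew, hc.hxy]
  split_ifs <;> simp

lemma hcz (s : SIdx m) : ⁅c s, c (.inr 0)⁆ = 0 := by
  rw [← lie_skew, hc.hz, neg_zero]

lemma Z_lie (u : L) : ⁅c (.inr 0), u⁆ = 0 := by
  conv_lhs => rw [← c.sum_repr u]
  simp only [lie_sum', lie_smul, hc.hz, smul_zero, Finset.sum_const_zero]

lemma lie_Z (u : L) : ⁅u, c (.inr 0)⁆ = 0 := by
  rw [← lie_skew, hc.Z_lie, neg_zero]

lemma lie_X (u : L) (b : Fin m) : ⁅u, c (.inl (.inl b))⁆ =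
    -(c.repr u (.inl (.inr b)) • c (.inr 0)) := by
  rw [lie_single c u]
  simp [Fintype.sum_sum_type, hc.hxx, hc.hyx, hc.hz, smul_ite]

lemma lie_Y (u : L) (b : Fin m) : ⁅u, c (.inl (.inr b))⁆ =
    c.repr u (.inl (.inl b)) • c (.inr 0) := by
  rw [lie_single c u]
  simp [Fintype.sum_sum_type, hc.hxy, hc.hyy, hc.hz, smul_ite]

lemma X_lie (u : L) (b : Fin m) : ⁅c (.inl (.inl b)), u⁆ =
    c.repr u (.inl (.inr b)) • c (.inr 0) := by
  rw [← lie_skew, hc.lie_X, neg_neg]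

lemma Y_lie (u : L) (b : Fin m) : ⁅c (.inl (.inr b)), u⁆ =
    -(c.repr u (.inl (.inl b)) • c (.inr 0)) := by
  rw [← lie_skew, hc.lie_Y]

lemma lie_mem (u v : L) : ⁅u, v⁆ ∈ Submodule.span F {c (.inr 0)} := by
  rw [lie_expand c u v]
  refine Submodule.sum_mem _ fun s _ => Submodule.sum_mem _ fun t _ => ?_
  refine Submodule.smul_mem _ _ ?_
  rcases s with (a | a) | i <;> rcases t with (b | b) | j
  · rw [hc.hxx]; exact Submodule.zero_mem _
  · rw [hc.hxy]; split_ifs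
    · exact Submodule.mem_span_singleton_self _
    · exact Submodule.zero_mem _
  · have : j = 0 := Subsingleton.elim _ _
    rw [this, hc.hcz]; exact Submodule.zero_mem _
  · rw [hc.hyx]; split_ifs
    · exact Submodule.neg_mem _ (Submodule.mem_span_singleton_self _)
    · exact Submodule.zero_mem _
  · rw [hc.hyy]; exact Submodule.zero_mem _
  · have : j = 0 := Subsingleton.elim _ _
    rw [this, hc.hcz]; exact Submodule.zero_mem _
  · have : i = 0 := Subsingleton.elim _ _
    rw [this, hc.hz]; exact Submodule.zero_mem _
  · have : i = 0 := Subsingleton.elim _ _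
    rw [this, hc.hz]; exact Submodule.zero_mem _
  · have : i = 0 := Subsingleton.elim _ _
    rw [this, hc.hz]; exact Submodule.zero_mem _

lemma lie_lie (u v w : L) : ⁅⁅u, v⁆, w⁆ = 0 := by
  obtain ⟨t, ht⟩ := Submodule.mem_span_singleton.mp (hc.lie_mem u v)
  rw [← ht, smul_lie, hc.Z_lie, smul_zero]

end IsHeis


abbrev SymIdx (m : ℕ) := {q : Fin m × Fin m // q.1 ≤ q.2}

abbrev Wd (F : Type*) (m : ℕ) [Field F] :=
  ((Fin m × Fin m) → F) × (SymIdx m → F) × (SymIdx m → F) × F × ((Fin m ⊕ Fin m) → F)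

variable (F) in
def symF (Q : SymIdx m → F) (a b : Fin m) : F :=
  if h : a ≤ b then Q ⟨(a, b), h⟩ else Q ⟨(b, a), le_of_not_ge h⟩

lemma symF_of_le {Q : SymIdx m → F} {a b : Fin m} (h : a ≤ b) :
    symF F Q a b = Q ⟨(a, b), h⟩ := dif_pos h

lemma symF_comm (Q : SymIdx m → F) (a b : Fin m) : symF F Q a b = symF F Q b a := by
  unfold symF
  rcases lt_trichotomy a b with h | rfl | h
  · rw [dif_pos h.le, dif_neg (not_le.mpr h)]
  · rfl
  · rw [dif_neg (not_le.mpr h), dif_pos h.le]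

noncomputable def vdef (d : Wd F m) : SIdx m → L := fun s => match s with
  | .inl (.inl b) => (∑ a, d.1 (a, b) • c (.inl (.inl a)))
      + ((∑ a, symF F d.2.2.1 a b • c (.inl (.inr a))) + d.2.2.2.2 (.inl b) • c (.inr 0))
  | .inl (.inr b) => (∑ a, symF F d.2.1 a b • c (.inl (.inl a)))
      + ((∑ a, ((if a = b then d.2.2.2.1 else 0) - d.1 (b, a)) • c (.inl (.inr a)))
          + d.2.2.2.2 (.inr b) • c (.inr 0))
  | .inr _ => d.2.2.2.1 • c (.inr 0)

lemma rvXX (d : Wd F m) (a b : Fin m) :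
    c.repr (vdef c d (.inl (.inl b))) (.inl (.inl a)) = d.1 (a, b) := by
  simp [vdef, Finsupp.single_apply]

lemma rvXY (d : Wd F m) (a b : Fin m) :
    c.repr (vdef c d (.inl (.inl b))) (.inl (.inr a)) = symF F d.2.2.1 a b := by
  simp [vdef, Finsupp.single_apply]

lemma rvXZ (d : Wd F m) (b : Fin m) :
    c.repr (vdef c d (.inl (.inl b))) (.inr 0) = d.2.2.2.2 (.inl b) := by
  simp [vdef, Finsupp.single_apply]

lemma rvYX (d : Wd F m) (a b : Fin m) :
    c.repr (vdef c d (.inl (.inr b))) (.inl (.inl a)) = symF F d.2.1 a b := by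
  simp [vdef, Finsupp.single_apply]

lemma rvYY (d : Wd F m) (a b : Fin m) :
    c.repr (vdef c d (.inl (.inr b))) (.inl (.inr a)) =
      (if a = b then d.2.2.2.1 else 0) - d.1 (b, a) := by
  simp [vdef, Finsupp.single_apply]

lemma rvYZ (d : Wd F m) (b : Fin m) :
    c.repr (vdef c d (.inl (.inr b))) (.inr 0) = d.2.2.2.2 (.inr b) := by
  simp [vdef, Finsupp.single_apply]

lemma rvZZ (d : Wd F m) (i : Fin 1) :
    c.repr (vdef c d (.inr i)) (.inr 0) = d.2.2.2.1 := by
  simp [vdef, Finsupp.single_apply]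

lemma sum_repr_split (u : L) :
    (∑ a, c.repr u (.inl (.inl a)) • c (.inl (.inl a)))
      + ((∑ a, c.repr u (.inl (.inr a)) • c (.inl (.inr a)))
          + c.repr u (.inr 0) • c (.inr 0)) = u := by
  conv_rhs => rw [← c.sum_repr u]
  rw [Fintype.sum_sum_type, Fintype.sum_sum_type]
  simp [add_assoc]


lemma vdef_inr (d : Wd F m) (i : Fin 1) :
    vdef c d (.inr i) = d.2.2.2.1 • c (.inr 0) := rfl

lemma rvZX (d : Wd F m) (i : Fin 1) (s : Fin m ⊕ Fin m) :
    c.repr (vdef c d (.inr i)) (.inl s) = 0 := by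
  rcases s with a | a <;> simp [vdef, Finsupp.single_apply]

lemma smulZ_inj {t s : F} (h : t • c (.inr (0 : Fin 1)) = s • c (.inr 0)) : t = s := by
  have h2 := sub_eq_zero.mpr h
  rw [← sub_smul] at h2
  rcases smul_eq_zero.mp h2 with h' | h'
  · exact sub_eq_zero.mp h'
  · exact absurd h' (c.ne_zero _)

namespace IsHeis
variable {c} (hc : IsHeis c)
include hc

/-- The derivation constructed from data `d`. -/
noncomputable def mkD (d : Wd F m) : LieDerivation F L L where
  toLinearMap := c.constr F (vdef c d)
  leibniz' := leibniz_of_basis c _ (by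
    intro s t
    rcases s with (a | a) | i <;> rcases t with (b | b) | j
    all_goals try obtain rfl : i = 0 := Subsingleton.elim _ _
    all_goals try obtain rfl : j = 0 := Subsingleton.elim _ _
    all_goals simp only [hc.hxx, hc.hxy, hc.hyx, hc.hyy, hc.hz, hc.hcz,
      apply_ite (c.constr F (vdef c d)), map_zero, map_neg, Module.Basis.constr_basis]
    all_goals simp only [hc.X_lie, hc.Y_lie, hc.Z_lie, rvXX, rvXY, rvXZ, rvYX, rvYY,
      rvYZ, rvZZ, rvZX, vdef_inr, map_smul, Module.Basis.repr_self, Finsupp.single_apply,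
      Finsupp.smul_apply, smul_eq_mul, mul_ite, mul_one, mul_zero, reduceCtorEq,
      Sum.inr.injEq, Sum.inl.injEq, if_false, if_true]
    all_goals try split_ifs with h
    all_goals try subst h
    all_goals try simp only [symF_comm]
    all_goals try module
    all_goals simp)

lemma mk_apply (d : Wd F m) (u : L) : hc.mkD d u = c.constr F (vdef c d) u := rfl

lemma mk_basis (d : Wd F m) (s : SIdx m) : hc.mkD d (c s) = vdef c d s := by
  rw [hc.mk_apply, Module.Basis.constr_basis]

variable (D : LieDerivation F L L)

lemma derZ (hm : 0 < m) :
    D (c (.inr 0)) = c.repr (D (c (.inr 0))) (.inr 0) • c (.inr 0) := by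
  set a0 : Fin m := ⟨0, hm⟩
  have h0 : (c (.inr 0) : L) = ⁅c (.inl (.inl a0)), c (.inl (.inr a0))⁆ := by
    rw [hc.hxy, if_pos rfl]
  have ht : D (c (.inr 0)) =
      (c.repr (D (c (.inl (.inr a0)))) (.inl (.inr a0))
        + c.repr (D (c (.inl (.inl a0)))) (.inl (.inl a0))) • c (.inr 0) := by
    conv_lhs => rw [h0, D.apply_lie_eq_sub, hc.X_lie, hc.Y_lie]
    module
  have hmu : c.repr (D (c (.inr 0))) (.inr 0) =
      c.repr (D (c (.inl (.inr a0)))) (.inl (.inr a0))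
        + c.repr (D (c (.inl (.inl a0)))) (.inl (.inl a0)) := by
    rw [ht]; simp [Finsupp.single_apply]
  rw [hmu]; exact ht

lemma derR (a b : Fin m) :
    c.repr (D (c (.inl (.inl b)))) (.inl (.inr a)) =
      c.repr (D (c (.inl (.inl a)))) (.inl (.inr b)) := by
  have h := D.apply_lie_eq_sub (c (.inl (.inl a))) (c (.inl (.inl b)))
  rw [hc.hxx, map_zero, hc.X_lie, hc.X_lie, ← sub_smul] at h
  exact sub_eq_zero.mp (((smul_eq_zero.mp h.symm).resolve_right (c.ne_zero _)))

lemma derQ (a b : Fin m) :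
    c.repr (D (c (.inl (.inr b)))) (.inl (.inl a)) =
      c.repr (D (c (.inl (.inr a)))) (.inl (.inl b)) := by
  have h := D.apply_lie_eq_sub (c (.inl (.inr a))) (c (.inl (.inr b)))
  rw [hc.hyy, map_zero, hc.Y_lie, hc.Y_lie] at h
  exact smulZ_inj c (by linear_combination (norm := module) h)

lemma derS (hm : 0 < m) (a b : Fin m) :
    c.repr (D (c (.inl (.inr b)))) (.inl (.inr a)) =
      (if a = b then c.repr (D (c (.inr 0))) (.inr 0) else 0)
        - c.repr (D (c (.inl (.inl a)))) (.inl (.inl b)) := by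
  have h := D.apply_lie_eq_sub (c (.inl (.inl a))) (c (.inl (.inr b)))
  rw [hc.hxy] at h
  rcases eq_or_ne a b with rfl | hab
  · rw [if_pos rfl, hc.derZ D hm, hc.X_lie, hc.Y_lie] at h
    rw [if_pos rfl]
    exact smulZ_inj c (by linear_combination (norm := module) -h)
  · rw [if_neg hab, map_zero, hc.X_lie, hc.Y_lie] at h
    rw [if_neg hab]
    exact smulZ_inj c (by linear_combination (norm := module) -h)

end IsHeis

/-- coordinates of a derivation -/
noncomputable def psiW : LieDerivation F L L →ₗ[F] Wd F m where
  toFun D :=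
    (fun q => c.repr (D (c (.inl (.inl q.2)))) (.inl (.inl q.1)),
     fun q => c.repr (D (c (.inl (.inr q.1.2)))) (.inl (.inl q.1.1)),
     fun q => c.repr (D (c (.inl (.inl q.1.2)))) (.inl (.inr q.1.1)),
     c.repr (D (c (.inr 0))) (.inr 0),
     fun s => c.repr (D (c (.inl s))) (.inr 0))
  map_add' D E := by
    refine Prod.ext (by funext q; simp) (Prod.ext (by funext q; simp)
      (Prod.ext (by funext q; simp) (Prod.ext (by simp) (by funext s; simp))))
  map_smul' t D := by
    refine Prod.ext (by funext q; simp) (Prod.ext (by funext q; simp)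
      (Prod.ext (by funext q; simp) (Prod.ext (by simp) (by funext s; simp))))

namespace IsHeis
variable {c} (hc : IsHeis c)
include hc

lemma mk_psi (hm : 0 < m) (D : LieDerivation F L L) : hc.mkD (psiW c D) = D := by
  have hlin : (hc.mkD (psiW c D)).toLinearMap = D.toLinearMap := by
    refine Module.Basis.ext c fun s => ?_
    have hb : (hc.mkD (psiW c D)).toLinearMap (c s) = vdef c (psiW c D) s := by
      exact Module.Basis.constr_basis c F _ s
    rw [hb]
    rcases s with (b | b) | i
    · show _ = D (c (.inl (.inl b)))
      conv_rhs => rw [← sum_repr_split c (D (c (.inl (.inl b))))]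
      simp only [vdef, psiW, LinearMap.coe_mk, AddHom.coe_mk]
      congr 2
      refine Finset.sum_congr rfl fun a _ => ?_
      congr 1
      unfold symF
      split_ifs with hab
      · rfl
      · exact hc.derR D b a
    · show _ = D (c (.inl (.inr b)))
      conv_rhs => rw [← sum_repr_split c (D (c (.inl (.inr b))))]
      simp only [vdef, psiW, LinearMap.coe_mk, AddHom.coe_mk]
      have hQ : ∀ a : Fin m, symF F
          (fun q : SymIdx m => c.repr (D (c (.inl (.inr q.1.2)))) (.inl (.inl q.1.1))) a b
            = c.repr (D (c (.inl (.inr b)))) (.inl (.inl a)) := by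
        intro a; unfold symF; split_ifs with hab
        · rfl
        · exact hc.derQ D b a
      have hS : ∀ a : Fin m, ((if a = b then c.repr (D (c (.inr 0))) (.inr 0) else 0)
          - c.repr (D (c (.inl (.inl a)))) (.inl (.inl b)))
            = c.repr (D (c (.inl (.inr b)))) (.inl (.inr a)) := fun a => (hc.derS D hm a b).symm
      simp only [hQ, hS]
    · obtain rfl : i = 0 := Subsingleton.elim _ _
      show _ = D (c (.inr 0))
      rw [vdef_inr]
      exact (hc.derZ D hm).symm
  exact LieDerivation.ext fun u => LinearMap.congr_fun hlin u

lemma psi_mk (d : Wd F m) : psiW c (hc.mkD d) = d := by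
  obtain ⟨P, Q, R, mu, cc⟩ := d
  refine Prod.ext ?_ (Prod.ext ?_ (Prod.ext ?_ (Prod.ext ?_ ?_)))
  · funext q
    simp [psiW, hc.mk_basis, rvXX]
  · funext q
    obtain ⟨⟨a, b⟩, hab⟩ := q
    simp [psiW, hc.mk_basis, rvYX, symF_of_le hab]
  · funext q
    obtain ⟨⟨a, b⟩, hab⟩ := q
    simp [psiW, hc.mk_basis, rvXY, symF_of_le hab]
  · simp [psiW, hc.mk_basis, rvZZ]
  · funext s
    rcases s with a | a <;> simp [psiW, hc.mk_basis, rvXZ, rvYZ]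

/-- the coordinate equivalence for the space of derivations -/
noncomputable def derEquiv (hm : 0 < m) : LieDerivation F L L ≃ₗ[F] Wd F m :=
  LinearEquiv.ofBijective (psiW c)
    ⟨Function.LeftInverse.injective (g := hc.mkD) (fun D => hc.mk_psi hm D),
     Function.RightInverse.surjective (g := hc.mkD) (fun d => hc.psi_mk d)⟩

end IsHeis


lemma two_mul_card_symIdx : 2 * Fintype.card (SymIdx m) = m * m + m := by
  have h1 : Fintype.card (SymIdx m) = (m + 1).choose 2 := by
    rw [← Fintype.card_congr (Sym2.sortEquiv (α := Fin m)), Sym2.card, Fintype.card_fin]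
  have h2 : 2 ∣ (m + 1) * m := by
    rw [mul_comm]; exact (Nat.even_mul_succ_self m).two_dvd
  rw [h1, Nat.choose_two_right]
  simp only [Nat.add_sub_cancel]
  rw [Nat.mul_div_cancel' h2]
  ring

lemma finrank_Wd : Module.finrank F (Wd F m) = 2 * m ^ 2 + 3 * m + 1 := by
  have hs := two_mul_card_symIdx (m := m)
  simp only [Wd, Module.finrank_prod, Module.finrank_pi, Fintype.card_prod, Fintype.card_sum,
    Fintype.card_fin, Module.finrank_self]
  nlinarith [hs]

/-- the `z`-component functional on derivations -/
noncomputable def muL : LieDerivation F L L →ₗ[F] F where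
  toFun D := c.repr (D (c (.inr 0))) (.inr 0)
  map_add' D E := by simp
  map_smul' t D := by simp

namespace IsHeis
variable {c} (hc : IsHeis c)
include hc

lemma muL_mkD (d : Wd F m) : muL c (hc.mkD d) = d.2.2.2.1 := by
  show c.repr (hc.mkD d (c (.inr 0))) (.inr 0) = _
  rw [hc.mk_basis, rvZZ]

lemma derZ' (hm : 0 < m) (D : LieDerivation F L L) :
    D (c (.inr 0)) = muL c D • c (.inr 0) := hc.derZ D hm

lemma muL_surjective (hm : 0 < m) : Function.Surjective (muL c (m := m)) := by
  intro x
  refine ⟨x • hc.mkD ⟨0, 0, 0, 1, 0⟩, ?_⟩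
  rw [map_smul, hc.muL_mkD]
  simp

lemma iter_zero (g t : L) (k : ℕ) : (fun x => ⁅x, g⁆)^[k + 2] t = 0 := by
  rw [Function.iterate_add_apply]
  have h2 : (fun x => ⁅x, g⁆)^[2] t = 0 := by
    show ⁅⁅t, g⁆, g⁆ = 0
    exact hc.lie_lie t g g
  rw [h2]
  exact Function.iterate_fixed (by simp) k

lemma ker_inner : LinearMap.ker (LieDerivation.inner F L L) =
    Submodule.span F {c (.inr (0 : Fin 1))} := by
  apply le_antisymm
  · intro h hk
    rw [LinearMap.mem_ker] at hk
    have hcoord : ∀ s : Fin m ⊕ Fin m, c.repr h (.inl s) = 0 := by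
      rintro (a | a)
      · have := DFunLike.congr_fun hk (c (.inl (.inr a)))
        rw [LieDerivation.inner_apply_apply, hc.Y_lie, LieDerivation.zero_apply,
          neg_eq_zero] at this
        exact (smul_eq_zero.mp this).resolve_right (c.ne_zero _)
      · have := DFunLike.congr_fun hk (c (.inl (.inl a)))
        rw [LieDerivation.inner_apply_apply, hc.X_lie, LieDerivation.zero_apply] at this
        exact (smul_eq_zero.mp this).resolve_right (c.ne_zero _)
    have : h = c.repr h (.inr 0) • c (.inr 0) := by
      conv_lhs => rw [← sum_repr_split c h]
      simp [hcoord]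
    rw [this]
    exact Submodule.smul_mem _ _ (Submodule.mem_span_singleton_self _)
  · rw [Submodule.span_singleton_le_iff_mem, LinearMap.mem_ker]
    apply LieDerivation.ext
    intro g
    rw [LieDerivation.inner_apply_apply, hc.lie_Z, LieDerivation.zero_apply]

lemma finrank_range_inner [FiniteDimensional F L]
    (hL : Module.finrank F L = 2 * m + 1) :
    Module.finrank F (LinearMap.range (LieDerivation.inner F L L) : Submodule F
      (LieDerivation F L L)) = 2 * m := by
  have h1 := LinearMap.finrank_range_add_finrank_ker (LieDerivation.inner F L L)
  rw [hc.ker_inner, finrank_span_singleton (c.ne_zero _), hL] at h1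
  omega

end IsHeis

end heis

end HeisAux


/-- Let `F` be an algebraically closed field of characteristic `p > 2`, let
`m ≥ 1`, and let `λ ∈ F^{2m+1}`.  The restricted `[p]`-map on `h_m` determined by `λ` is
`g^{[p]} = (Σ_i a_i^p λ_i) e_{2m+1}` for `g = Σ_i a_i e_i`.  Consider the subspace `D_λ` of
derivations `ψ` of `h_m` satisfying `ψ(g^{[p]}) = [⋯[[ψ(g),g],g],…,g]` ((p−1)-fold right
bracketing with `g`) for all `g`; this subspace contains all inner derivations.  Then
`D_λ / Inn(h_m) = H¹_*(h_m^λ, h_m^λ)` has dimension `2m² + m + 1` if `λ = 0`, and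
dimension `2m² + m` if `λ ≠ 0`. -/
theorem heisenberg_restricted_H1_dim_p_gt_two
    (F : Type*) [Field F] [IsAlgClosed F] (p : ℕ) [CharP F p] (hp : p.Prime) (hp2 : 2 < p)
    (m : ℕ) (hm : 1 ≤ m)
    (L : Type*) [LieRing L] [LieAlgebra F L]
    (b : Module.Basis (Fin (2*m+1)) F L)
    (hb : ∀ i j : Fin (2*m+1), ⁅b i, b j⁆ =
      if (j : ℕ) = (i : ℕ) + m ∧ (i : ℕ) < m then b (Fin.last (2*m))
      else if (i : ℕ) = (j : ℕ) + m ∧ (j : ℕ) < m then - b (Fin.last (2*m))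
      else 0)
    (lam : Fin (2*m+1) → F)
    (P : L → L)
    (hP : ∀ g : L, P g = (∑ i, (b.repr g i)^p * lam i) • b (Fin.last (2*m)))
    (Dlam : Submodule F (LieDerivation F L L))
    (hD : ∀ ψ : LieDerivation F L L, ψ ∈ Dlam ↔
      ∀ g : L, ψ (P g) = (fun x => ⁅x, g⁆)^[p-1] (ψ g))
    (Inn : Submodule F (LieDerivation F L L))
    (hInn : ∀ D : LieDerivation F L L, D ∈ Inn ↔ ∃ h : L, ∀ g : L, D g = ⁅h, g⁆) :
    Inn ≤ Dlam ∧
    (lam = 0 →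
      Module.finrank F (↥Dlam ⧸ Submodule.comap Dlam.subtype Inn) = 2*m^2 + m + 1) ∧
    (lam ≠ 0 →
      Module.finrank F (↥Dlam ⧸ Submodule.comap Dlam.subtype Inn) = 2*m^2 + m) := by
  classical
  have hm0 : 0 < m := hm
  let ee : HeisAux.SIdx m ≃ Fin (2*m+1) :=
    ((finSumFinEquiv (m := m) (n := m)).sumCongr (Equiv.refl (Fin 1))).trans
      (finSumFinEquiv.trans (finCongr (by omega)))
  have v1 : ∀ a : Fin m, (ee (.inl (.inl a)) : ℕ) = (a : ℕ) := by
    intro a; simp [ee, finCongr_apply]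
  have v2 : ∀ a : Fin m, (ee (.inl (.inr a)) : ℕ) = m + (a : ℕ) := by
    intro a; simp [ee, finCongr_apply]; omega
  have v3 : ∀ i : Fin 1, (ee (.inr i) : ℕ) = 2*m := by
    intro i
    obtain rfl : i = 0 := Subsingleton.elim _ _
    simp [ee, finCongr_apply]
  let c : Module.Basis (HeisAux.SIdx m) F L := b.reindex ee.symm
  have hcs : ∀ s, c s = b (ee s) := fun s => by simp [c]
  have hZ : c (.inr 0) = b (Fin.last (2*m)) := by
    rw [hcs]; congr 1; ext; rw [v3]; simp [Fin.last]
  have hc : HeisAux.IsHeis c := by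
    constructor
    · intro a b'
      rw [hcs, hcs, hb, hZ]
      simp only [v1, v2]
      rcases eq_or_ne a b' with rfl | hab
      · rw [if_pos ⟨by omega, a.isLt⟩, if_pos rfl]
      · have h1 : ¬((m + (b' : ℕ) = (a : ℕ) + m) ∧ (a : ℕ) < m) := by
          rintro ⟨h, _⟩; exact hab (Fin.ext (by omega))
        have h2 : ¬(((a : ℕ) = m + (b' : ℕ) + m) ∧ m + (b' : ℕ) < m) := by
          rintro ⟨_, h⟩; omega
        rw [if_neg h1, if_neg h2, if_neg hab]
    · intro a b'
      rw [hcs, hcs, hb]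
      simp only [v1]
      have ha := a.isLt; have hb' := b'.isLt
      rw [if_neg (by rintro ⟨h1, h2⟩; omega), if_neg (by rintro ⟨h1, h2⟩; omega)]
    · intro a b'
      rw [hcs, hcs, hb]
      simp only [v2]
      rw [if_neg (by rintro ⟨h1, h2⟩; omega), if_neg (by rintro ⟨h1, h2⟩; omega)]
    · intro s
      rw [hcs, hcs, hb]
      simp only [v3]
      rw [if_neg (by rintro ⟨h1, h2⟩; omega), if_neg (by rintro ⟨h1, h2⟩; omega)]
  obtain ⟨k, hk⟩ : ∃ k, p - 1 = k + 2 := ⟨p - 3, by omega⟩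
  have hiter : ∀ (ψ : LieDerivation F L L) (g : L),
      (fun x => ⁅x, g⁆)^[p-1] (ψ g) = 0 := by
    intro ψ g; rw [hk]; exact hc.iter_zero g (ψ g) k
  have hInnEq : Inn = LinearMap.range (LieDerivation.inner F L L) := by
    ext D
    rw [hInn, LinearMap.mem_range]
    constructor
    · rintro ⟨h, hh⟩
      refine ⟨-h, ?_⟩
      apply LieDerivation.ext; intro g
      rw [LieDerivation.inner_apply_apply, hh g, lie_neg, lie_skew]
    · rintro ⟨h, rfl⟩
      refine ⟨-h, fun g => ?_⟩
      rw [LieDerivation.inner_apply_apply, neg_lie, lie_skew]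
  have hInnDlam : Inn ≤ Dlam := by
    intro D hDI
    rw [hD]
    intro g
    rw [hiter, hP g]
    obtain ⟨h, hh⟩ := (hInn D).mp hDI
    rw [map_smul, hh, ← hZ, hc.lie_Z, smul_zero]
  haveI hFDL : FiniteDimensional F L := Module.Finite.of_basis b
  haveI hFDD : FiniteDimensional F (LieDerivation F L L) :=
    LinearEquiv.finiteDimensional (hc.derEquiv hm0).symm
  have hrD : Module.finrank F (LieDerivation F L L) = 2*m^2 + 3*m + 1 := by
    rw [LinearEquiv.finrank_eq (hc.derEquiv hm0), HeisAux.finrank_Wd]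
  have hL : Module.finrank F L = 2*m+1 := by
    rw [Module.finrank_eq_card_basis b, Fintype.card_fin]
  have hrI : Module.finrank F ↥Inn = 2*m := by
    rw [hInnEq]; exact hc.finrank_range_inner hL
  have hquot : Module.finrank F (↥Dlam ⧸ Submodule.comap Dlam.subtype Inn) + 2*m
      = Module.finrank F ↥Dlam := by
    have h1 := Submodule.finrank_quotient_add_finrank (Submodule.comap Dlam.subtype Inn)
    rwa [LinearEquiv.finrank_eq (Submodule.comapSubtypeEquivOfLe hInnDlam), hrI] at h1
  refine ⟨hInnDlam, ?_, ?_⟩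
  · intro hlam
    have hDl : Dlam = ⊤ := by
      rw [Submodule.eq_top_iff']
      intro ψ
      rw [hD]
      intro g
      rw [hiter, hP g, hlam]
      simp
    have hfr : Module.finrank F ↥Dlam = 2*m^2 + 3*m + 1 := by
      rw [hDl, finrank_top]; exact hrD
    linarith [hquot, hfr]
  · intro hlam
    have hDl : Dlam = LinearMap.ker (HeisAux.muL c) := by
      ext ψ
      rw [hD, LinearMap.mem_ker]
      constructor
      · intro hall
        obtain ⟨i0, hi0⟩ := Function.ne_iff.mp hlam
        have h1 := hall (b i0)
        rw [hiter, hP] at h1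
        have hsum : (∑ i, (b.repr (b i0) i)^p * lam i) = lam i0 := by
          simp [Finsupp.single_apply, apply_ite (· ^ p), zero_pow hp.ne_zero]
        rw [hsum, map_smul] at h1
        have h2 : ψ (b (Fin.last (2*m))) = 0 :=
          (smul_eq_zero.mp h1).resolve_left hi0
        show c.repr (ψ (c (.inr 0))) (.inr 0) = 0
        rw [hZ, h2]
        simp
      · intro hker g
        rw [hiter, hP, map_smul, ← hZ, hc.derZ' hm0 ψ, hker, zero_smul, smul_zero]
    have hfr : Module.finrank F ↥Dlam = 2*m^2 + 3*m := by
      rw [hDl]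
      have h1 := LinearMap.finrank_range_add_finrank_ker (HeisAux.muL c (m := m))
      rw [LinearMap.range_eq_top.mpr (hc.muL_surjective hm0), finrank_top, Module.finrank_self,
        hrD] at h1
      omega
    linarith [hquot, hfr]
end

section
/- Let F be an algebraically closed field of characteristic 2, let m ≥ 1, and let λ = (λ_1, …, λ_{2m+1}) ∈ F^{2m+1} with λ_{2m+1} = 0. Consider the subspace D_λ of derivations ψ of h_m satisfying [g, ψ(g)] = ψ(g^{[2]}) for all g ∈ h_m; this subspace contains all inner derivations. Then the quotient space D_λ / Inn(h_m) (which is the restricted cohomology H¹_*(h_m^λ(2), h_m^λ(2))) has dimension 2m² − m + 1 over F. -/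
namespace HeisAux

variable {m : ℕ}

def lo (j : Fin m) : Fin (2*m+1) := ⟨(j:ℕ), by have := j.isLt; omega⟩
def hi (j : Fin m) : Fin (2*m+1) := ⟨m + (j:ℕ), by have := j.isLt; omega⟩

@[simp] lemma lo_val (j : Fin m) : ((lo j : Fin (2*m+1)) : ℕ) = j := rfl
@[simp] lemma hi_val (j : Fin m) : ((hi j : Fin (2*m+1)) : ℕ) = m + j := rfl

def pr (i j : Fin (2*m+1)) : Prop :=
  ((j : ℕ) = (i : ℕ) + m ∧ (i : ℕ) < m) ∨ ((i : ℕ) = (j : ℕ) + m ∧ (j : ℕ) < m)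

instance (i j : Fin (2*m+1)) : Decidable (pr i j) := by unfold pr; infer_instance

lemma pr_symm {i j : Fin (2*m+1)} : pr i j ↔ pr j i := by unfold pr; tauto

def sg (i : Fin (2*m+1)) : Fin (2*m+1) :=
  if h : (i:ℕ) < m then ⟨(i:ℕ) + m, by omega⟩
  else if h2 : (i:ℕ) < 2*m then ⟨(i:ℕ) - m, by omega⟩
  else i

lemma sg_of_lt {i : Fin (2*m+1)} (h : (i:ℕ) < m) : sg i = ⟨(i:ℕ) + m, by omega⟩ := dif_pos h

lemma sg_of_mid {i : Fin (2*m+1)} (h1 : ¬ (i:ℕ) < m) (h2 : (i:ℕ) < 2*m) :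
    sg i = ⟨(i:ℕ) - m, by omega⟩ := by rw [sg, dif_neg h1, dif_pos h2]

lemma sg_lo (j : Fin m) : sg (lo j) = hi j := by
  rw [sg_of_lt (by simpa using j.isLt)]; exact Fin.ext (by simp [hi, Nat.add_comm])

lemma sg_hi (j : Fin m) : sg (hi j) = lo j := by
  rw [sg_of_mid (by simp) (by simp; omega)]; exact Fin.ext (by simp)

lemma sg_val_lt {i : Fin (2*m+1)} (h : (i:ℕ) < 2*m) : (sg i : ℕ) < 2*m := by
  by_cases h1 : (i:ℕ) < m
  · rw [sg_of_lt h1]; simp; omega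
  · rw [sg_of_mid h1 h]; simp; omega

lemma lo_or_hi {i : Fin (2*m+1)} (h : (i:ℕ) < 2*m) :
    (∃ j : Fin m, i = lo j) ∨ (∃ j : Fin m, i = hi j) := by
  by_cases h1 : (i:ℕ) < m
  · exact Or.inl ⟨⟨(i:ℕ), h1⟩, Fin.ext rfl⟩
  · exact Or.inr ⟨⟨(i:ℕ) - m, by omega⟩, Fin.ext (by simp; omega)⟩

lemma sg_sg {i : Fin (2*m+1)} (h : (i:ℕ) < 2*m) : sg (sg i) = i := by
  rcases lo_or_hi h with ⟨j, rfl⟩ | ⟨j, rfl⟩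
  · rw [sg_lo, sg_hi]
  · rw [sg_hi, sg_lo]

lemma pr_iff {i j : Fin (2*m+1)} : pr i j ↔ ((i:ℕ) < 2*m ∧ j = sg i) := by
  constructor
  · rintro (⟨h1, h2⟩ | ⟨h1, h2⟩)
    · refine ⟨by omega, ?_⟩
      rw [sg_of_lt h2]; exact Fin.ext (by simpa using h1)
    · refine ⟨by omega, ?_⟩
      rw [sg_of_mid (by omega) (by omega)]; exact Fin.ext (by simp; omega)
  · rintro ⟨h1, rfl⟩
    by_cases hA : (i:ℕ) < m
    · rw [sg_of_lt hA]; exact Or.inl ⟨rfl, hA⟩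
    · rw [sg_of_mid hA h1]; exact Or.inr ⟨(by omega : (i:ℕ) = (i:ℕ) - m + m), (by omega : (i:ℕ) - m < m)⟩

lemma sg_ne_last {i : Fin (2*m+1)} (h : (i:ℕ) < 2*m) : sg i ≠ Fin.last (2*m) := by
  have := sg_val_lt h
  intro hc; rw [hc] at this; simp at this


section Brackets
variable (F : Type*) [Field F] [CharP F 2] {m : ℕ}
  {L : Type*} [LieRing L]

lemma lieSum (x : L) {ι : Type*} (s : Finset ι) (f : ι → L) :
    ⁅x, ∑ i ∈ s, f i⁆ = ∑ i ∈ s, ⁅x, f i⁆ :=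
  map_sum (⟨⟨fun y => ⁅x, y⁆, lie_zero x⟩, lie_add x⟩ : L →+ L) f s

lemma sumLie (y : L) {ι : Type*} (s : Finset ι) (f : ι → L) :
    ⁅∑ i ∈ s, f i, y⁆ = ∑ i ∈ s, ⁅f i, y⁆ :=
  map_sum (⟨⟨fun x => ⁅x, y⁆, zero_lie y⟩, fun a b => add_lie a b y⟩ : L →+ L) f s

variable [LieAlgebra F L]

include F in
lemma neg_eq_self (x : L) : -x = x := by
  rw [← neg_one_smul F x, CharTwo.neg_eq, one_smul]

variable (b : Module.Basis (Fin (2*m+1)) F L)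
variable (hb : ∀ i j : Fin (2*m+1), ⁅b i, b j⁆ =
      if (j : ℕ) = (i : ℕ) + m ∧ (i : ℕ) < m then b (Fin.last (2*m))
      else if (i : ℕ) = (j : ℕ) + m ∧ (j : ℕ) < m then - b (Fin.last (2*m))
      else 0)

include hb in
/-- char-2 symmetric form of the bracket relations -/
lemma hb2 (i j : Fin (2*m+1)) :
    ⁅b i, b j⁆ = if pr i j then b (Fin.last (2*m)) else 0 := by
  rw [hb i j]
  by_cases h1 : (j : ℕ) = (i : ℕ) + m ∧ (i : ℕ) < m
  · rw [if_pos h1, if_pos (show pr i j from Or.inl h1)]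
  · rw [if_neg h1]
    by_cases h2 : (i : ℕ) = (j : ℕ) + m ∧ (j : ℕ) < m
    · rw [if_pos h2, if_pos (show pr i j from Or.inr h2), neg_eq_self F]
    · rw [if_neg h2, if_neg (show ¬ pr i j by rintro (h|h) <;> [exact h1 h; exact h2 h])]

/-- coefficient functional -/
noncomputable def wf (i : Fin (2*m+1)) (y : L) : F :=
  if (i:ℕ) < 2*m then b.repr y (sg i) else 0

include hb in
lemma lie_basis_left (i : Fin (2*m+1)) (y : L) :
    ⁅b i, y⁆ = wf F b i y • b (Fin.last (2*m)) := by
  conv_lhs => rw [← b.sum_repr y]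
  rw [lieSum]
  simp only [lie_smul, hb2 F b hb, smul_ite, smul_zero]
  unfold wf
  by_cases h : (i:ℕ) < 2*m
  · rw [if_pos h]
    have : ∀ k : Fin (2*m+1), pr i k ↔ k = sg i := by
      intro k; rw [pr_iff]; constructor
      · exact fun hh => hh.2
      · exact fun hh => ⟨h, hh⟩
    simp only [this]
    rw [Finset.sum_ite_eq' Finset.univ (sg i) (fun k => b.repr y k • b (Fin.last (2*m)))]
    simp
  · rw [if_neg h]
    have : ∀ k : Fin (2*m+1), ¬ pr i k := by
      intro k hk; rw [pr_iff] at hk; exact h hk.1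
    simp [this]

include hb in
lemma lie_basis_right (i : Fin (2*m+1)) (y : L) :
    ⁅y, b i⁆ = wf F b i y • b (Fin.last (2*m)) := by
  rw [← neg_eq_self F (⁅y, b i⁆), lie_skew, lie_basis_left F b hb]

include hb in
/-- general bracket formula -/
lemma lie_eq (x y : L) :
    ⁅x, y⁆ = (∑ i, b.repr x i * wf F b i y) • b (Fin.last (2*m)) := by
  conv_lhs => rw [← b.sum_repr x]
  rw [sumLie]
  simp only [smul_lie, lie_basis_left F b hb, smul_smul]
  rw [Finset.sum_smul]

@[simp] lemma wf_last_right (i : Fin (2*m+1)) :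
    wf F b i (b (Fin.last (2*m))) = 0 := by
  unfold wf
  by_cases h : (i:ℕ) < 2*m
  · rw [if_pos h, b.repr_self, Finsupp.single_apply,
      if_neg (by exact fun hc => sg_ne_last h hc.symm)]
  · rw [if_neg h]

include hb in
lemma lie_last_right (x : L) : ⁅x, b (Fin.last (2*m))⁆ = 0 := by
  rw [lie_eq F b hb]; simp

include hb in
lemma lie_last_left (x : L) : ⁅b (Fin.last (2*m)), x⁆ = 0 := by
  rw [← neg_eq_self F (⁅b (Fin.last (2*m)), x⁆), lie_skew, lie_last_right F b hb]

/-- a vector supported on the last coordinate -/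
lemma eq_last_smul {y : L} (h : ∀ i : Fin (2*m+1), (i:ℕ) < 2*m → b.repr y i = 0) :
    y = b.repr y (Fin.last (2*m)) • b (Fin.last (2*m)) := by
  conv_lhs => rw [← b.sum_repr y]
  refine Finset.sum_eq_single (Fin.last (2*m)) ?_ ?_
  · intro k _ hk
    have hv : (k:ℕ) ≠ 2*m := fun hc => hk (Fin.ext (by simpa using hc))
    have := k.isLt
    rw [h k (by omega), zero_smul]
  · simp

end Brackets


section Quad
variable (F : Type*) [Field F] [CharP F 2] {m : ℕ}
  {L : Type*} [LieRing L] [LieAlgebra F L]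
  (b : Module.Basis (Fin (2*m+1)) F L)

/-- Leibniz rule from its basis instances -/
lemma leibniz_ext (M : L →ₗ[F] L)
    (h : ∀ i j, M ⁅b i, b j⁆ = ⁅M (b i), b j⁆ + ⁅b i, M (b j)⁆) (x y : L) :
    M ⁅x, y⁆ = ⁅M x, y⁆ + ⁅x, M y⁆ := by
  rw [← b.sum_repr x, ← b.sum_repr y]
  simp only [sumLie, lieSum, smul_lie, lie_smul, map_sum, map_smul, Finset.smul_sum, h,
    smul_add, Finset.sum_add_distrib]

def aext (s : Finset (Fin (2*m+1))) (a : Fin (2*m+1) → F) (i : Fin (2*m+1)) : F :=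
  if i ∈ s then a i else 0

lemma aext_insert {s : Finset (Fin (2*m+1))} {a : Fin (2*m+1) → F} {k : Fin (2*m+1)}
    (hk : k ∉ s) (i : Fin (2*m+1)) :
    aext F (insert k s) a i = aext F s a i + (if i = k then a k else 0) := by
  unfold aext
  by_cases h : i = k
  · subst h; simp [hk]
  · simp [Finset.mem_insert, h]

lemma cross_eval (c : F) (ψ : L →ₗ[F] L)
    (h2 : ∀ i j, i ≠ j → ⁅b i, ψ (b j)⁆ + ⁅b j, ψ (b i)⁆ =
      (if pr i j then c else 0) • b (Fin.last (2*m)))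
    (s : Finset (Fin (2*m+1))) (a : Fin (2*m+1) → F) (k : Fin (2*m+1)) (hk : k ∉ s) :
    ⁅b k, ψ (∑ i ∈ s, a i • b i)⁆ + ⁅∑ i ∈ s, a i • b i, ψ (b k)⁆
    = (c * (if (k:ℕ) < 2*m then aext F s a (sg k) else 0)) • b (Fin.last (2*m)) := by
  rw [map_sum, lieSum, sumLie]
  simp only [map_smul, lie_smul, smul_lie]
  rw [← Finset.sum_add_distrib]
  have key : ∀ i ∈ s, a i • ⁅b k, ψ (b i)⁆ + a i • ⁅b i, ψ (b k)⁆
      = (a i * if pr k i then c else 0) • b (Fin.last (2*m)) := by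
    intro i hi
    rw [← smul_add, h2 k i (fun hc => hk (hc ▸ hi)), smul_smul]
  rw [Finset.sum_congr rfl key, ← Finset.sum_smul]
  congr 1
  by_cases hk2 : (k:ℕ) < 2*m
  · rw [if_pos hk2]
    have hiff : ∀ i, (pr k i) ↔ i = sg k :=
      fun i => by rw [pr_iff]; exact ⟨fun h => h.2, fun h => ⟨hk2, h⟩⟩
    calc ∑ i ∈ s, (a i * if pr k i then c else 0)
        = ∑ i ∈ s, (if i = sg k then a i * c else 0) := by
          refine Finset.sum_congr rfl (fun i _ => ?_)
          by_cases h : i = sg k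
          · rw [if_pos ((hiff i).mpr h), if_pos h]
          · rw [if_neg (fun hp => h ((hiff i).mp hp)), if_neg h, mul_zero]
      _ = if sg k ∈ s then a (sg k) * c else 0 := Finset.sum_ite_eq' s (sg k) _
      _ = c * aext F s a (sg k) := by unfold aext; split_ifs <;> ring
  · rw [if_neg hk2]
    have : ∀ i, ¬ pr k i := fun i h => hk2 (pr_iff.mp h).1
    simp [this]

lemma pair_insert (s : Finset (Fin (2*m+1))) (a : Fin (2*m+1) → F)
    (k : Fin (2*m+1)) (hk : k ∉ s) :
    ∑ j : Fin m, aext F (insert k s) a (lo j) * aext F (insert k s) a (hi j)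
    = (∑ j : Fin m, aext F s a (lo j) * aext F s a (hi j))
      + a k * (if (k:ℕ) < 2*m then aext F s a (sg k) else 0) := by
  have hterm : ∀ j : Fin m,
      aext F (insert k s) a (lo j) * aext F (insert k s) a (hi j)
      = aext F s a (lo j) * aext F s a (hi j)
        + ((if lo j = k then a k else 0) * aext F s a (hi j)
          + aext F s a (lo j) * (if hi j = k then a k else 0)) := by
    intro j
    rw [aext_insert F hk, aext_insert F hk]
    have hne : ¬ ((lo j : Fin (2*m+1)) = k ∧ (hi j : Fin (2*m+1)) = k) := by
      rintro ⟨h1, h2⟩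
      rw [← h2] at h1
      have hv := congrArg Fin.val h1
      simp only [lo_val, hi_val] at hv
      have hj := j.isLt
      omega
    by_cases h1 : (lo j : Fin (2*m+1)) = k
    · rw [if_pos h1, if_neg (fun hc => hne ⟨h1, hc⟩)]; ring
    · rw [if_neg h1]
      by_cases h2 : (hi j : Fin (2*m+1)) = k
      · rw [if_pos h2]; ring
      · rw [if_neg h2]; ring
  rw [Finset.sum_congr rfl (fun j _ => hterm j), Finset.sum_add_distrib,
    Finset.sum_add_distrib]
  by_cases hk1 : (k:ℕ) < m
  · have c1 : ∑ j : Fin m, (if lo j = k then a k else 0) * aext F s a (hi j)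
        = a k * aext F s a (sg k) := by
      calc ∑ j : Fin m, (if lo j = k then a k else 0) * aext F s a (hi j)
          = ∑ j : Fin m, (if j = ⟨(k:ℕ), hk1⟩ then a k * aext F s a (hi j) else 0) := by
            refine Finset.sum_congr rfl (fun j _ => ?_)
            by_cases h : j = (⟨(k:ℕ), hk1⟩ : Fin m)
            · rw [if_pos h, if_pos (by subst h; exact Fin.ext rfl)]
            · rw [if_neg h, if_neg (fun hc => h (Fin.ext (by simpa using congrArg Fin.val hc))),
                zero_mul]
        _ = a k * aext F s a (hi ⟨(k:ℕ), hk1⟩) := by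
            rw [Finset.sum_ite_eq' Finset.univ _ (fun j => a k * aext F s a (hi j))]
            simp
        _ = a k * aext F s a (sg k) := by
            rw [show sg k = hi ⟨(k:ℕ), hk1⟩ from by
              rw [sg_of_lt hk1]; exact Fin.ext (by simp [Nat.add_comm])]
    have c2 : ∑ j : Fin m, aext F s a (lo j) * (if hi j = k then a k else 0) = 0 := by
      refine Finset.sum_eq_zero (fun j _ => ?_)
      rw [if_neg (fun hc => by
        have hv := congrArg Fin.val hc
        simp only [hi_val] at hv
        omega), mul_zero]
    rw [if_pos (show (k:ℕ) < 2*m by omega), c1, c2]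
    ring
  · by_cases hk2 : (k:ℕ) < 2*m
    · have c1 : ∑ j : Fin m, (if lo j = k then a k else 0) * aext F s a (hi j) = 0 := by
        refine Finset.sum_eq_zero (fun j _ => ?_)
        rw [if_neg (fun hc => by
          have hv := congrArg Fin.val hc
          simp only [lo_val] at hv
          have hj := j.isLt
          omega), zero_mul]
      have c2 : ∑ j : Fin m, aext F s a (lo j) * (if hi j = k then a k else 0)
          = a k * aext F s a (sg k) := by
        calc ∑ j : Fin m, aext F s a (lo j) * (if hi j = k then a k else 0)
            = ∑ j : Fin m, (if j = ⟨(k:ℕ) - m, by omega⟩ then a k * aext F s a (lo j) else 0) := by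
              refine Finset.sum_congr rfl (fun j _ => ?_)
              by_cases h : j = (⟨(k:ℕ) - m, by omega⟩ : Fin m)
              · rw [if_pos (by subst h; exact Fin.ext (by simp only [hi_val, Fin.val_mk]; omega)),
                  if_pos h]
                ring
              · rw [if_neg (fun hc => h (Fin.ext (by
                  have hv := congrArg Fin.val hc
                  simp only [hi_val, Fin.val_mk] at hv ⊢
                  omega))), if_neg h, mul_zero]
          _ = a k * aext F s a (lo ⟨(k:ℕ) - m, by omega⟩) := by
              rw [Finset.sum_ite_eq' Finset.univ _ (fun j => a k * aext F s a (lo j))]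
              simp
          _ = a k * aext F s a (sg k) := by
              rw [show sg k = lo ⟨(k:ℕ) - m, by omega⟩ from by
                rw [sg_of_mid hk1 hk2]; exact Fin.ext (by simp)]
      rw [if_pos hk2, c1, c2]
      ring
    · have c1 : ∑ j : Fin m, (if lo j = k then a k else 0) * aext F s a (hi j) = 0 := by
        refine Finset.sum_eq_zero (fun j _ => ?_)
        rw [if_neg (fun hc => by
          have hv := congrArg Fin.val hc
          simp only [lo_val] at hv
          have hj := j.isLt
          omega), zero_mul]
      have c2 : ∑ j : Fin m, aext F s a (lo j) * (if hi j = k then a k else 0) = 0 := by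
        refine Finset.sum_eq_zero (fun j _ => ?_)
        rw [if_neg (fun hc => by
          have hv := congrArg Fin.val hc
          simp only [hi_val] at hv
          have hj := j.isLt
          omega), mul_zero]
      rw [if_neg hk2, c1, c2]
      ring


/-- the quadratic form attached to `lam` -/
noncomputable def q0 (lam : Fin (2*m+1) → F) (g : L) : F :=
  (∑ i, (b.repr g i)^2 * lam i) + ∑ j : Fin m, b.repr g (lo j) * b.repr g (hi j)

lemma quad_ident (lam : Fin (2*m+1) → F) (c : F) (ψ : L →ₗ[F] L)
    (h3 : ∀ i, ⁅b i, ψ (b i)⁆ = (c * lam i) • b (Fin.last (2*m)))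
    (h2 : ∀ i j, i ≠ j → ⁅b i, ψ (b j)⁆ + ⁅b j, ψ (b i)⁆ =
      (if pr i j then c else 0) • b (Fin.last (2*m)))
    (g : L) :
    ⁅g, ψ g⁆ = (c * q0 F b lam g) • b (Fin.last (2*m)) := by
  suffices H : ∀ s : Finset (Fin (2*m+1)), ∀ a : Fin (2*m+1) → F,
      ⁅∑ i ∈ s, a i • b i, ψ (∑ i ∈ s, a i • b i)⁆ =
      (c * ((∑ i ∈ s, (a i)^2 * lam i)
        + ∑ j : Fin m, aext F s a (lo j) * aext F s a (hi j))) • b (Fin.last (2*m)) by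
    have hg := H Finset.univ (fun i => b.repr g i)
    rw [b.sum_repr g] at hg
    rw [hg]
    unfold q0 aext
    simp
  intro s
  induction s using Finset.induction_on with
  | empty => intro a; simp [aext]
  | insert _ _ hk _ =>
    rename_i k s' ih
    intro a
    rw [Finset.sum_insert hk]
    have expand : ∀ u v : L, ⁅u + v, ψ (u + v)⁆ =
        ⁅u, ψ u⁆ + (⁅u, ψ v⁆ + ⁅v, ψ u⁆) + ⁅v, ψ v⁆ := by
      intro u v
      rw [map_add]
      rw [add_lie, lie_add, lie_add]
      abel
    rw [expand]
    have t1 : ⁅a k • b k, ψ (a k • b k)⁆ = ((a k)^2 * (c * lam k)) • b (Fin.last (2*m)) := by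
      rw [map_smul, smul_lie, lie_smul, h3 k, smul_smul, smul_smul]
      ring_nf
    have t2 : ⁅a k • b k, ψ (∑ i ∈ s', a i • b i)⁆ + ⁅∑ i ∈ s', a i • b i, ψ (a k • b k)⁆
        = (a k * (c * (if (k:ℕ) < 2*m then aext F s' a (sg k) else 0))) • b (Fin.last (2*m)) := by
      rw [map_smul, smul_lie, lie_smul, ← smul_add,
        cross_eval F b c ψ h2 s' a k hk, smul_smul]
    rw [t1, t2, ih a, Finset.sum_insert hk, pair_insert F s' a k hk]
    rw [← add_smul, ← add_smul]
    congr 1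
    ring


end Quad

section Constr

/-- strict lower-triangle index type -/
abbrev Tri (m : ℕ) := Σ j : Fin m, Fin (j:ℕ)

variable (F : Type*) [Field F] {m : ℕ}

/-- the parameter space -/
abbrev VSp (m : ℕ) := (Fin m → Fin m → F) × F × (Tri m → F) × (Tri m → F)

/-- symmetric matrix from strict triangle data and a prescribed diagonal -/
def symEnt (t : Tri m → F) (c : F) (d : Fin m → F) (i j : Fin m) : F :=
  if h : (i:ℕ) < (j:ℕ) then t ⟨j, ⟨(i:ℕ), h⟩⟩
  else if h' : (j:ℕ) < (i:ℕ) then t ⟨i, ⟨(j:ℕ), h'⟩⟩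
  else c * d i

lemma symEnt_symm (t : Tri m → F) (c : F) (d : Fin m → F) {i j : Fin m}
    (hne : (i:ℕ) ≠ (j:ℕ)) :
    symEnt F t c d i j = symEnt F t c d j i := by
  unfold symEnt
  rcases lt_or_gt_of_ne hne with h | h
  · rw [dif_pos h, dif_neg (by omega), dif_pos h]
  · rw [dif_neg (by omega), dif_pos h, dif_pos h]

lemma symEnt_diag (t : Tri m → F) (c : F) (d : Fin m → F) {i j : Fin m}
    (h : (i:ℕ) = (j:ℕ)) : symEnt F t c d i j = c * d i := by
  unfold symEnt
  rw [dif_neg (by omega), dif_neg (by omega)]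

lemma symEnt_add (t t' : Tri m → F) (c c' : F) (d : Fin m → F) (i j : Fin m) :
    symEnt F (t + t') (c + c') d i j = symEnt F t c d i j + symEnt F t' c' d i j := by
  unfold symEnt
  split_ifs <;> first | rfl | (simp; try ring) | ring

lemma symEnt_smul (a : F) (t : Tri m → F) (c : F) (d : Fin m → F) (i j : Fin m) :
    symEnt F (a • t) (a * c) d i j = a * symEnt F t c d i j := by
  unfold symEnt
  split_ifs <;> first | rfl | (simp; try ring) | ring

variable (lam : Fin (2*m+1) → F)

/-- the matrix of the constructed derivation -/
def Mv (v : VSp F m) (i j : Fin (2*m+1)) : F :=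
  if hI : (i:ℕ) < m then
    if hJ : (j:ℕ) < m then v.1 ⟨(i:ℕ), hI⟩ ⟨(j:ℕ), hJ⟩
    else if hJ2 : (j:ℕ) < 2*m then
      symEnt F v.2.2.2 v.2.1 (fun a => lam (hi a)) ⟨(i:ℕ), hI⟩ ⟨(j:ℕ) - m, by omega⟩
    else 0
  else if hI2 : (i:ℕ) < 2*m then
    if hJ : (j:ℕ) < m then
      symEnt F v.2.2.1 v.2.1 (fun a => lam (lo a)) ⟨(i:ℕ) - m, by omega⟩ ⟨(j:ℕ), hJ⟩
    else if hJ2 : (j:ℕ) < 2*m then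
      v.1 ⟨(j:ℕ) - m, by omega⟩ ⟨(i:ℕ) - m, by omega⟩ + (if (i:ℕ) = (j:ℕ) then v.2.1 else 0)
    else 0
  else
    if hJ2 : (j:ℕ) < 2*m then 0 else v.2.1

lemma Mv_add (u v : VSp F m) (i j : Fin (2*m+1)) :
    Mv F lam (u + v) i j = Mv F lam u i j + Mv F lam v i j := by
  unfold Mv
  have e1 : (u + v).1 = u.1 + v.1 := rfl
  have e2 : (u + v).2.1 = u.2.1 + v.2.1 := rfl
  have e3 : (u + v).2.2.1 = u.2.2.1 + v.2.2.1 := rfl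
  have e4 : (u + v).2.2.2 = u.2.2.2 + v.2.2.2 := rfl
  rw [e1, e2, e3, e4]
  split_ifs <;> simp [symEnt_add] <;> ring

lemma Mv_smul (a : F) (v : VSp F m) (i j : Fin (2*m+1)) :
    Mv F lam (a • v) i j = a * Mv F lam v i j := by
  unfold Mv
  have e1 : (a • v).1 = a • v.1 := rfl
  have e2 : (a • v).2.1 = a * v.2.1 := rfl
  have e3 : (a • v).2.2.1 = a • v.2.2.1 := rfl
  have e4 : (a • v).2.2.2 = a • v.2.2.2 := rfl
  rw [e1, e2, e3, e4]
  split_ifs <;> simp [symEnt_smul] <;> ring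


lemma mk_lo_eq (a : Fin m) (h : ((lo a : Fin (2*m+1)):ℕ) < m) :
    (⟨((lo a : Fin (2*m+1)):ℕ), h⟩ : Fin m) = a := Fin.ext (by simp)

lemma mk_hi_sub (a : Fin m) {h : ((hi a : Fin (2*m+1)):ℕ) - m < m} :
    (⟨((hi a : Fin (2*m+1)):ℕ) - m, h⟩ : Fin m) = a :=
  Fin.ext (by simp only [hi_val, Fin.val_mk]; omega)

lemma Mv_PP (v : VSp F m) (a c : Fin m) : Mv F lam v (lo a) (lo c) = v.1 a c := by
  unfold Mv
  rw [dif_pos (show ((lo a : Fin (2*m+1)):ℕ) < m from a.isLt), dif_pos (show ((lo c : Fin (2*m+1)):ℕ) < m from c.isLt),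
    mk_lo_eq, mk_lo_eq]

lemma Mv_QQ (v : VSp F m) (a c : Fin m) :
    Mv F lam v (lo a) (hi c) = symEnt F v.2.2.2 v.2.1 (fun x => lam (hi x)) a c := by
  unfold Mv
  rw [dif_pos (show ((lo a : Fin (2*m+1)):ℕ) < m from a.isLt), dif_neg (by simp),
    dif_pos (by simp only [hi_val]; omega), mk_lo_eq, mk_hi_sub]

lemma Mv_RR (v : VSp F m) (a c : Fin m) :
    Mv F lam v (hi a) (lo c) = symEnt F v.2.2.1 v.2.1 (fun x => lam (lo x)) a c := by
  unfold Mv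
  rw [dif_neg (by simp), dif_pos (by simp only [hi_val]; omega),
    dif_pos (show ((lo c : Fin (2*m+1)):ℕ) < m from c.isLt), mk_hi_sub, mk_lo_eq]

lemma Mv_SS (v : VSp F m) (a c : Fin m) :
    Mv F lam v (hi a) (hi c) = v.1 c a + (if a = c then v.2.1 else 0) := by
  unfold Mv
  rw [dif_neg (by simp), dif_pos (by simp only [hi_val]; omega), dif_neg (by simp),
    dif_pos (by simp only [hi_val]; omega), mk_hi_sub, mk_hi_sub]
  congr 1
  have hiff : (((hi a : Fin (2*m+1)) : ℕ) = ((hi c : Fin (2*m+1)) : ℕ)) ↔ a = c := by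
    simp only [hi_val]
    exact ⟨fun h => Fin.ext (by omega), fun h => by rw [h]⟩
  by_cases h : a = c
  · rw [if_pos (hiff.mpr h), if_pos h]
  · rw [if_neg (fun hc => h (hiff.mp hc)), if_neg h]

lemma Mv_col_last (v : VSp F m) (i : Fin (2*m+1)) (h : (i:ℕ) < 2*m) :
    Mv F lam v i (Fin.last (2*m)) = 0 := by
  unfold Mv
  by_cases h1 : (i:ℕ) < m
  · rw [dif_pos h1, dif_neg (by simp only [Fin.val_last]; omega),
      dif_neg (by simp only [Fin.val_last]; omega)]
  · rw [dif_neg h1, dif_pos h, dif_neg (by simp only [Fin.val_last]; omega),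
      dif_neg (by simp only [Fin.val_last]; omega)]

lemma Mv_last_last (v : VSp F m) :
    Mv F lam v (Fin.last (2*m)) (Fin.last (2*m)) = v.2.1 := by
  unfold Mv
  rw [dif_neg (by simp only [Fin.val_last]; omega),
    dif_neg (by simp only [Fin.val_last]; omega),
    dif_neg (by simp only [Fin.val_last]; omega)]

lemma Mv_last_row (v : VSp F m) (j : Fin (2*m+1)) (h : (j:ℕ) < 2*m) :
    Mv F lam v (Fin.last (2*m)) j = 0 := by
  unfold Mv
  rw [dif_neg (by simp only [Fin.val_last]; omega),
    dif_neg (by simp only [Fin.val_last]; omega), dif_pos (by simpa using h)]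

lemma pr_lo_lo (a c : Fin m) : ¬ pr (lo a) (lo c) := by
  unfold pr
  simp only [lo_val]
  have := a.isLt; have := c.isLt
  omega

lemma pr_hi_hi (a c : Fin m) : ¬ pr (hi a) (hi c) := by
  unfold pr
  simp only [hi_val]
  have := a.isLt; have := c.isLt
  omega

lemma pr_lo_hi (a c : Fin m) : pr (lo a) (hi c) ↔ a = c := by
  unfold pr
  simp only [lo_val, hi_val]
  have := a.isLt; have := c.isLt
  constructor
  · rintro (⟨h, _⟩ | ⟨h, _⟩) <;> [exact Fin.ext (by omega); omega]
  · rintro rfl; left; exact ⟨by omega, a.isLt⟩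

lemma pr_hi_lo (a c : Fin m) : pr (hi a) (lo c) ↔ a = c := by
  rw [pr_symm, pr_lo_hi]
  exact ⟨fun h => h.symm, fun h => h.symm⟩

lemma pr_last_right (i : Fin (2*m+1)) : ¬ pr i (Fin.last (2*m)) := by
  unfold pr
  simp only [Fin.val_last]
  have := i.isLt
  omega

lemma pr_last_left (j : Fin (2*m+1)) : ¬ pr (Fin.last (2*m)) j := by
  rw [pr_symm]; exact pr_last_right j

lemma last_of_not_lt {i : Fin (2*m+1)} (h : ¬ (i:ℕ) < 2*m) : i = Fin.last (2*m) :=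
  Fin.ext (by have := i.isLt; simp only [Fin.val_last]; omega)

variable [CharP F 2]

lemma KeyDiag (hlam : lam (Fin.last (2*m)) = 0) (v : VSp F m) (i : Fin (2*m+1)) :
    (if (i:ℕ) < 2*m then Mv F lam v (sg i) i else 0) = v.2.1 * lam i := by
  by_cases h2 : (i:ℕ) < 2*m
  · rw [if_pos h2]
    rcases lo_or_hi h2 with ⟨a, rfl⟩ | ⟨a, rfl⟩
    · rw [sg_lo, Mv_RR, symEnt_diag F _ _ _ rfl]
    · rw [sg_hi, Mv_QQ, symEnt_diag F _ _ _ rfl]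
  · rw [if_neg h2, last_of_not_lt h2, hlam, mul_zero]

lemma KeyOff (v : VSp F m) (i j : Fin (2*m+1)) (hij : i ≠ j) :
    (if (i:ℕ) < 2*m then Mv F lam v (sg i) j else 0)
      + (if (j:ℕ) < 2*m then Mv F lam v (sg j) i else 0)
    = if pr i j then v.2.1 else 0 := by
  by_cases h2 : (i:ℕ) < 2*m
  · by_cases h3 : (j:ℕ) < 2*m
    · rw [if_pos h2, if_pos h3]
      rcases lo_or_hi h2 with ⟨a, rfl⟩ | ⟨a, rfl⟩ <;>
        rcases lo_or_hi h3 with ⟨c, rfl⟩ | ⟨c, rfl⟩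
      · -- lo lo
        have hac : (a:ℕ) ≠ (c:ℕ) := fun h => hij (Fin.ext (by simpa using h))
        rw [sg_lo, sg_lo, Mv_RR, Mv_RR, symEnt_symm F _ _ _ hac,
          CharTwo.add_self_eq_zero, if_neg (pr_lo_lo a c)]
      · -- lo hi
        rw [sg_lo, sg_hi, Mv_SS, Mv_PP]
        rw [show v.1 c a + (if a = c then v.2.1 else 0) + v.1 c a
            = (if a = c then v.2.1 else 0) + (v.1 c a + v.1 c a) from by ring,
          CharTwo.add_self_eq_zero, add_zero]
        by_cases h : a = c
        · rw [if_pos h, if_pos ((pr_lo_hi a c).mpr h)]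
        · rw [if_neg h, if_neg (fun hc => h ((pr_lo_hi a c).mp hc))]
      · -- hi lo
        rw [sg_hi, sg_lo, Mv_PP, Mv_SS]
        rw [show v.1 a c + (v.1 a c + (if c = a then v.2.1 else 0))
            = (if c = a then v.2.1 else 0) + (v.1 a c + v.1 a c) from by ring,
          CharTwo.add_self_eq_zero, add_zero]
        by_cases h : a = c
        · rw [if_pos h.symm, if_pos ((pr_hi_lo a c).mpr h)]
        · rw [if_neg (fun hc => h hc.symm), if_neg (fun hc => h ((pr_hi_lo a c).mp hc))]
      · -- hi hi
        have hac : (a:ℕ) ≠ (c:ℕ) := fun h => hij (Fin.ext (by simp only [hi_val]; omega))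
        rw [sg_hi, sg_hi, Mv_QQ, Mv_QQ, symEnt_symm F _ _ _ hac,
          CharTwo.add_self_eq_zero, if_neg (pr_hi_hi a c)]
    · rw [if_pos h2, if_neg h3, last_of_not_lt h3,
        Mv_col_last F lam v _ (sg_val_lt h2), add_zero, if_neg (pr_last_right i)]
  · rw [if_neg h2, last_of_not_lt h2, zero_add]
    by_cases h3 : (j:ℕ) < 2*m
    · rw [if_pos h3, Mv_col_last F lam v _ (sg_val_lt h3), if_neg (pr_last_left j)]
    · exact absurd (last_of_not_lt h2 ▸ last_of_not_lt h3) (by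
        intro h
        exact hij (by rw [last_of_not_lt h2, last_of_not_lt h3]))


end Constr

section Psi
variable (F : Type*) [Field F] [CharP F 2] {m : ℕ}
  {L : Type*} [LieRing L] [LieAlgebra F L]
  (b : Module.Basis (Fin (2*m+1)) F L)
variable (hb : ∀ i j : Fin (2*m+1), ⁅b i, b j⁆ =
      if (j : ℕ) = (i : ℕ) + m ∧ (i : ℕ) < m then b (Fin.last (2*m))
      else if (i : ℕ) = (j : ℕ) + m ∧ (j : ℕ) < m then - b (Fin.last (2*m))
      else 0)
variable (lam : Fin (2*m+1) → F)

lemma pr_self (j : Fin (2*m+1)) : ¬ pr j j := by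
  unfold pr
  have := j.isLt
  omega

lemma repr_sum_smul (f : Fin (2*m+1) → F) (k : Fin (2*m+1)) :
    b.repr (∑ i, f i • b i) k = f k := by
  rw [map_sum, Finsupp.finset_sum_apply]
  have e : ∀ i, (b.repr (f i • b i)) k = if i = k then f i else 0 := by
    intro i
    rw [map_smul, Finsupp.smul_apply, b.repr_self, Finsupp.single_apply]
    split_ifs <;> simp
  rw [Finset.sum_congr rfl (fun i _ => e i), Finset.sum_ite_eq' Finset.univ k f]
  simp

noncomputable def psiv (v : VSp F m) : L →ₗ[F] L :=
  b.constr F (fun j => ∑ i, Mv F lam v i j • b i)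

lemma psiv_basis (v : VSp F m) (j : Fin (2*m+1)) :
    psiv F b lam v (b j) = ∑ i, Mv F lam v i j • b i :=
  b.constr_basis F _ j

lemma repr_psiv (v : VSp F m) (j k : Fin (2*m+1)) :
    b.repr (psiv F b lam v (b j)) k = Mv F lam v k j := by
  rw [psiv_basis, repr_sum_smul]

lemma wf_psiv (v : VSp F m) (i j : Fin (2*m+1)) :
    wf F b i (psiv F b lam v (b j)) =
      if (i:ℕ) < 2*m then Mv F lam v (sg i) j else 0 := by
  unfold wf
  split_ifs with h
  · rw [repr_psiv]
  · rfl

lemma psiv_last (v : VSp F m) :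
    psiv F b lam v (b (Fin.last (2*m))) = v.2.1 • b (Fin.last (2*m)) := by
  rw [psiv_basis]
  rw [Finset.sum_eq_single (Fin.last (2*m))]
  · rw [Mv_last_last]
  · intro i _ hi
    have h2 : (i:ℕ) < 2*m := by
      have := i.isLt
      have : (i:ℕ) ≠ 2*m := fun hc => hi (Fin.ext (by simpa using hc))
      omega
    rw [Mv_col_last F lam v i h2, zero_smul]
  · intro h; exact absurd (Finset.mem_univ _) h

include hb in
lemma psiv_h3 (hlam : lam (Fin.last (2*m)) = 0) (v : VSp F m) (i : Fin (2*m+1)) :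
    ⁅b i, psiv F b lam v (b i)⁆ = (v.2.1 * lam i) • b (Fin.last (2*m)) := by
  rw [lie_basis_left F b hb, wf_psiv, KeyDiag F lam hlam v i]

include hb in
lemma psiv_h2 (v : VSp F m) (i j : Fin (2*m+1)) (hij : i ≠ j) :
    ⁅b i, psiv F b lam v (b j)⁆ + ⁅b j, psiv F b lam v (b i)⁆
    = (if pr i j then v.2.1 else 0) • b (Fin.last (2*m)) := by
  rw [lie_basis_left F b hb, lie_basis_left F b hb, wf_psiv, wf_psiv, ← add_smul,
    KeyOff F lam v i j hij]

include hb in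
lemma psiv_leibniz (v : VSp F m) (x y : L) :
    psiv F b lam v ⁅x, y⁆ = ⁅psiv F b lam v x, y⁆ + ⁅x, psiv F b lam v y⁆ := by
  refine leibniz_ext F b _ (fun i j => ?_) x y
  rw [hb2 F b hb i j]
  by_cases hij : i = j
  · subst hij
    rw [if_neg (pr_self i), map_zero,
      lie_basis_right F b hb i (psiv F b lam v (b i)),
      lie_basis_left F b hb i (psiv F b lam v (b i)), ← add_smul,
      CharTwo.add_self_eq_zero, zero_smul]
  · have hpl : psiv F b lam v (if pr i j then b (Fin.last (2*m)) else (0:L))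
        = (if pr i j then v.2.1 else 0) • b (Fin.last (2*m)) := by
      split_ifs
      · rw [psiv_last]
      · rw [map_zero, zero_smul]
    rw [hpl, lie_basis_right F b hb j (psiv F b lam v (b i)),
      lie_basis_left F b hb i (psiv F b lam v (b j)), ← add_smul, wf_psiv, wf_psiv,
      add_comm ((if (j:ℕ) < 2*m then Mv F lam v (sg j) i else 0)) _,
      KeyOff F lam v i j hij]

include hb in
/-- the constructed restricted derivation -/
noncomputable def DvD (v : VSp F m) : LieDerivation F L L :=
  ⟨psiv F b lam v, fun x y => by
    rw [psiv_leibniz F b hb lam v x y, sub_eq_add_neg, lie_skew]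
    abel⟩

include hb in
lemma DvD_apply (v : VSp F m) (g : L) : DvD F b hb lam v g = psiv F b lam v g := rfl

lemma psiv_add (u v : VSp F m) : psiv F b lam (u + v) = psiv F b lam u + psiv F b lam v := by
  unfold psiv
  have e : (fun j => ∑ i, Mv F lam (u + v) i j • b i)
      = (fun j => ∑ i, Mv F lam u i j • b i) + (fun j => ∑ i, Mv F lam v i j • b i) := by
    funext j
    rw [Pi.add_apply, ← Finset.sum_add_distrib]
    exact Finset.sum_congr rfl (fun i _ => by rw [Mv_add, add_smul])
  rw [e, map_add]

lemma psiv_smul (a : F) (v : VSp F m) : psiv F b lam (a • v) = a • psiv F b lam v := by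
  unfold psiv
  have e : (fun j => ∑ i, Mv F lam (a • v) i j • b i)
      = a • (fun j => ∑ i, Mv F lam v i j • b i) := by
    funext j
    rw [Pi.smul_apply, Finset.smul_sum]
    exact Finset.sum_congr rfl (fun i _ => by rw [Mv_smul, smul_smul])
  rw [e, map_smul]

include hb in
/-- the bundled linear map into derivations -/
noncomputable def PsiD : VSp F m →ₗ[F] LieDerivation F L L where
  toFun := DvD F b hb lam
  map_add' := fun u v => by
    apply LieDerivation.ext
    intro g
    rw [LieDerivation.add_apply, DvD_apply, DvD_apply, DvD_apply, psiv_add,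
      LinearMap.add_apply]
  map_smul' := fun a v => by
    apply LieDerivation.ext
    intro g
    rw [RingHom.id_apply, LieDerivation.smul_apply, DvD_apply, DvD_apply, psiv_smul,
      LinearMap.smul_apply]


lemma char2_shift {x y e : F} (h : x + y = e) : x = e + y := by
  have h2 : (2:F) = 0 := by
    have := CharP.cast_eq_zero F 2
    simpa using this
  linear_combination h - y * h2

lemma char2_of_add_zero {x y : F} (h : x + y = 0) : x = y := by
  have := char2_shift F h
  simpa using this

include hb in
lemma blast_cancel {s t : F} (h : s • b (Fin.last (2*m)) = t • b (Fin.last (2*m))) :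
    s = t := by
  have h2 := congrArg (fun z => b.repr z (Fin.last (2*m))) h
  simpa [b.repr_self, Finsupp.smul_apply, Finsupp.single_apply] using h2

/-- the "central character" of a derivation -/
noncomputable def cOf (ψ : LieDerivation F L L) : F :=
  b.repr (ψ (b (Fin.last (2*m)))) (Fin.last (2*m))

include hb in
lemma R1 (hm : 1 ≤ m) (ψ : LieDerivation F L L) :
    ψ (b (Fin.last (2*m))) = cOf F b ψ • b (Fin.last (2*m)) := by
  set z : Fin m := ⟨0, hm⟩ with hz
  have hbr : ⁅b (lo z), b (hi z)⁆ = b (Fin.last (2*m)) := by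
    rw [hb2 F b hb, if_pos ((pr_lo_hi z z).mpr rfl)]
  have hexp : ψ (b (Fin.last (2*m)))
      = ⁅b (lo z), ψ (b (hi z))⁆ + ⁅ψ (b (lo z)), b (hi z)⁆ := by
    rw [← hbr, LieDerivation.apply_lie_eq_add]
  rw [lie_basis_left F b hb, lie_basis_right F b hb, ← add_smul] at hexp
  have hc : cOf F b ψ = wf F b (lo z) (ψ (b (hi z))) + wf F b (hi z) (ψ (b (lo z))) := by
    unfold cOf
    rw [hexp]
    simp [b.repr_self, Finsupp.smul_apply, Finsupp.single_apply]
  rw [hexp, hc]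

section Restricted
variable (hm : 1 ≤ m)
variable (ψ : LieDerivation F L L)
variable (hψ : ∀ g : L, ⁅g, ψ g⁆ = q0 F b lam g • ψ (b (Fin.last (2*m))))

lemma repr_finsum (s : Finset (Fin (2*m+1))) (a : Fin (2*m+1) → F) (x : Fin (2*m+1)) :
    b.repr (∑ k ∈ s, a k • b k) x = aext F s a x := by
  rw [map_sum, Finsupp.finset_sum_apply]
  have e : ∀ k, (b.repr (a k • b k)) x = if k = x then a k else 0 := by
    intro k
    rw [map_smul, Finsupp.smul_apply, b.repr_self, Finsupp.single_apply]
    split_ifs <;> simp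
  rw [Finset.sum_congr rfl (fun k _ => e k), Finset.sum_ite_eq' s x a]
  rfl

lemma q0_finsum (s : Finset (Fin (2*m+1))) (a : Fin (2*m+1) → F) :
    q0 F b lam (∑ k ∈ s, a k • b k)
    = (∑ k ∈ s, (a k)^2 * lam k) + ∑ j : Fin m, aext F s a (lo j) * aext F s a (hi j) := by
  unfold q0
  congr 1
  · calc ∑ i, (b.repr (∑ k ∈ s, a k • b k) i)^2 * lam i
        = ∑ i, (aext F s a i)^2 * lam i := by
          exact Finset.sum_congr rfl (fun i _ => by rw [repr_finsum])
      _ = ∑ k ∈ s, (aext F s a k)^2 * lam k :=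
          (Finset.sum_subset (Finset.subset_univ s) (fun x _ hx => by
            unfold aext; rw [if_neg hx]; ring)).symm
      _ = ∑ k ∈ s, (a k)^2 * lam k :=
          Finset.sum_congr rfl (fun k hk => by unfold aext; rw [if_pos hk])
  · exact Finset.sum_congr rfl (fun j _ => by rw [repr_finsum, repr_finsum])

lemma pairing_single (i : Fin (2*m+1)) (a : Fin (2*m+1) → F) :
    ∑ j : Fin m, aext F {i} a (lo j) * aext F {i} a (hi j) = 0 := by
  rw [show ({i} : Finset (Fin (2*m+1))) = insert i ∅ from rfl,
    pair_insert F ∅ a i (by simp)]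
  simp [aext]

lemma q0_basis (i : Fin (2*m+1)) : q0 F b lam (b i) = lam i := by
  have h1 : b i = ∑ k ∈ ({i} : Finset (Fin (2*m+1))), (fun _ => (1:F)) k • b k := by simp
  rw [h1, q0_finsum, Finset.sum_singleton, pairing_single]
  ring

lemma q0_two (i j : Fin (2*m+1)) (hij : i ≠ j) :
    q0 F b lam (b i + b j) = lam i + lam j + (if pr i j then 1 else 0) := by
  have hnotin : i ∉ ({j} : Finset (Fin (2*m+1))) := by simp [hij]
  have h1 : b i + b j = ∑ k ∈ insert i {j}, (fun _ => (1:F)) k • b k := by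
    rw [Finset.sum_insert hnotin, Finset.sum_singleton]
    simp
  rw [h1, q0_finsum, Finset.sum_insert hnotin, Finset.sum_singleton,
    pair_insert F {j} _ i hnotin, pairing_single]
  have hX : (if (i:ℕ) < 2*m then aext F {j} (fun _ => (1:F)) (sg i) else 0)
      = if pr i j then 1 else 0 := by
    by_cases h2m : (i:ℕ) < 2*m
    · rw [if_pos h2m]
      unfold aext
      by_cases hsg : j = sg i
      · rw [if_pos (Finset.mem_singleton.mpr hsg.symm), if_pos (pr_iff.mpr ⟨h2m, hsg⟩)]
      · rw [if_neg (fun hc => hsg (Finset.mem_singleton.mp hc).symm),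
          if_neg (fun hp => hsg (pr_iff.mp hp).2)]
    · rw [if_neg h2m, if_neg (fun hp => h2m (pr_iff.mp hp).1)]
  rw [hX]
  ring

include hb hψ hm in
lemma Rtwo (i : Fin (2*m+1)) :
    ⁅b i, ψ (b i)⁆ = (cOf F b ψ * lam i) • b (Fin.last (2*m)) := by
  have h := hψ (b i)
  rw [q0_basis, R1 F b hb hm ψ, smul_smul] at h
  rw [h, mul_comm]

include hb hψ hm in
lemma R3w (i j : Fin (2*m+1)) (hij : i ≠ j) :
    wf F b i (ψ (b j)) + wf F b j (ψ (b i))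
    = if pr i j then cOf F b ψ else 0 := by
  have hc := hψ (b i + b j)
  rw [q0_two F b lam i j hij, R1 F b hb hm ψ, map_add, add_lie, lie_add, lie_add,
    Rtwo F b hb lam hm ψ hψ i, Rtwo F b hb lam hm ψ hψ j,
    lie_basis_left F b hb i (ψ (b j)), lie_basis_left F b hb j (ψ (b i)),
    smul_smul] at hc
  simp only [← add_smul] at hc
  have hsc := blast_cancel F b hb hc
  rw [mul_comm] at hsc
  split_ifs with hp <;> [skip; skip] <;> split_ifs at hsc <;> linear_combination hsc

include hb hψ hm in
lemma R2r (i : Fin (2*m+1)) (h2m : (i:ℕ) < 2*m) :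
    b.repr (ψ (b i)) (sg i) = cOf F b ψ * lam i := by
  have h := Rtwo F b hb lam hm ψ hψ i
  rw [lie_basis_left F b hb] at h
  have h2 := blast_cancel F b hb h
  unfold wf at h2
  rwa [if_pos h2m] at h2

/-- readback of parameters from a derivation -/
noncomputable def vOf : VSp F m :=
  (fun a c => b.repr (ψ (b (lo c))) (lo a),
   cOf F b ψ,
   fun t => b.repr (ψ (b (lo t.1))) (hi ⟨(t.2:ℕ), lt_trans t.2.isLt t.1.isLt⟩),
   fun t => b.repr (ψ (b (hi t.1))) (lo ⟨(t.2:ℕ), lt_trans t.2.isLt t.1.isLt⟩))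

lemma lo_mk_val (a : Fin m) {h : (a:ℕ) < m} : lo (⟨(a:ℕ), h⟩ : Fin m) = lo a :=
  Fin.ext rfl

lemma hi_mk_val (a : Fin m) {h : (a:ℕ) < m} : hi (⟨(a:ℕ), h⟩ : Fin m) = hi a :=
  Fin.ext rfl

include hb hψ hm in
lemma agree (i j : Fin (2*m+1)) (h2m : (i:ℕ) < 2*m) :
    b.repr (ψ (b j)) i = Mv F lam (vOf F b ψ) i j := by
  by_cases hj2 : (j:ℕ) < 2*m
  · rcases lo_or_hi h2m with ⟨a, rfl⟩ | ⟨a, rfl⟩ <;>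
      rcases lo_or_hi hj2 with ⟨c, rfl⟩ | ⟨c, rfl⟩
    · -- row lo a, col lo c : P block
      rw [Mv_PP]
      rfl
    · -- row lo a, col hi c : Q block
      rw [Mv_QQ]
      unfold symEnt
      rcases lt_trichotomy (a:ℕ) (c:ℕ) with h | h | h
      · rw [dif_pos h]
        exact (congrArg (⇑(b.repr (ψ (b (hi c))))) (lo_mk_val a)).symm
      · have hac : a = c := Fin.ext h
        subst hac
        rw [dif_neg (by omega), dif_neg (by omega)]
        have h5 := R2r F b hb lam hm ψ hψ (hi a) (by simp only [hi_val]; omega)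
        rwa [sg_hi] at h5
      · rw [dif_neg (by omega), dif_pos h]
        have hne : (hi a : Fin (2*m+1)) ≠ hi c := fun hc => by
          have hv := congrArg Fin.val hc
          simp only [hi_val] at hv
          omega
        have h3 := R3w F b hb lam hm ψ hψ (hi a) (hi c) hne
        rw [if_neg (pr_hi_hi a c)] at h3
        unfold wf at h3
        rw [if_pos (by simp only [hi_val]; omega), if_pos (by simp only [hi_val]; omega),
          sg_hi, sg_hi] at h3
        rw [char2_of_add_zero F h3]
        exact (congrArg (⇑(b.repr (ψ (b (hi a))))) (lo_mk_val c)).symm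
    · -- row hi a, col lo c : R block
      rw [Mv_RR]
      unfold symEnt
      rcases lt_trichotomy (a:ℕ) (c:ℕ) with h | h | h
      · rw [dif_pos h]
        exact (congrArg (⇑(b.repr (ψ (b (lo c))))) (hi_mk_val a)).symm
      · have hac : a = c := Fin.ext h
        subst hac
        rw [dif_neg (by omega), dif_neg (by omega)]
        have h5 := R2r F b hb lam hm ψ hψ (lo a) (by simp only [lo_val]; have := a.isLt; omega)
        rwa [sg_lo] at h5
      · rw [dif_neg (by omega), dif_pos h]
        have hne : (lo a : Fin (2*m+1)) ≠ lo c := fun hc => by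
          have hv := congrArg Fin.val hc
          simp only [lo_val] at hv
          omega
        have h3 := R3w F b hb lam hm ψ hψ (lo a) (lo c) hne
        rw [if_neg (pr_lo_lo a c)] at h3
        unfold wf at h3
        rw [if_pos (by simp only [lo_val]; have := a.isLt; omega),
          if_pos (by simp only [lo_val]; have := c.isLt; omega),
          sg_lo, sg_lo] at h3
        rw [char2_of_add_zero F h3]
        exact (congrArg (⇑(b.repr (ψ (b (lo a))))) (hi_mk_val c)).symm
    · -- row hi a, col hi c : S block
      rw [Mv_SS]
      have hne : (lo a : Fin (2*m+1)) ≠ hi c := fun hc => by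
        have hv := congrArg Fin.val hc
        simp only [lo_val, hi_val] at hv
        have := a.isLt
        omega
      have h3 := R3w F b hb lam hm ψ hψ (lo a) (hi c) hne
      unfold wf at h3
      rw [if_pos (by simp only [lo_val]; have := a.isLt; omega),
        if_pos (by simp only [hi_val]; omega), sg_lo, sg_hi] at h3
      have h4 := char2_shift F h3
      rw [h4]
      have hcond : (if pr (lo a) (hi c) then cOf F b ψ else 0) = if a = c then cOf F b ψ else 0 := by
        by_cases h : a = c
        · rw [if_pos ((pr_lo_hi a c).mpr h), if_pos h]
        · rw [if_neg (fun hp => h ((pr_lo_hi a c).mp hp)), if_neg h]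
      rw [hcond]
      rw [add_comm]
      rfl
  · have hjl : j = Fin.last (2*m) := last_of_not_lt hj2
    subst hjl
    rw [Mv_col_last F lam _ i h2m, R1 F b hb hm ψ, map_smul, Finsupp.smul_apply,
      b.repr_self, Finsupp.single_apply,
      if_neg (fun hc : Fin.last (2*m) = i => by
        rw [← hc] at h2m
        simp only [Fin.val_last] at h2m
        omega), smul_zero]


end Restricted

include hb in
lemma psiv_restricted (hlam : lam (Fin.last (2*m)) = 0) (v : VSp F m) (g : L) :
    ⁅g, psiv F b lam v g⁆ = q0 F b lam g • psiv F b lam v (b (Fin.last (2*m))) := by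
  rw [psiv_last, quad_ident F b lam v.2.1 (psiv F b lam v)
    (psiv_h3 F b hb lam hlam v) (psiv_h2 F b hb lam v) g, smul_smul]
  congr 1
  ring

lemma repr_emb_sum (e : Fin m → Fin (2*m+1)) (f : Fin m → F) (x : Fin (2*m+1)) :
    b.repr (∑ a, f a • b (e a)) x = ∑ a, (if e a = x then f a else 0) := by
  rw [map_sum, Finsupp.finset_sum_apply]
  exact Finset.sum_congr rfl (fun a _ => by
    rw [map_smul, Finsupp.smul_apply, b.repr_self, Finsupp.single_apply]
    split_ifs <;> simp)

lemma sum_ite_emb_eq (f : Fin m → F) (a0 : Fin m) (e : Fin m → Fin (2*m+1))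
    (he : ∀ a a', e a = e a' ↔ a = a') :
    ∑ a, (if e a = e a0 then f a else 0) = f a0 := by
  have : ∀ a : Fin m, (if e a = e a0 then f a else 0) = if a = a0 then f a else 0 := by
    intro a
    by_cases h : a = a0
    · rw [if_pos ((he a a0).mpr h), if_pos h]
    · rw [if_neg (fun hc => h ((he a a0).mp hc)), if_neg h]
  rw [Finset.sum_congr rfl (fun a _ => this a), Finset.sum_ite_eq' Finset.univ a0 f]
  simp

lemma lo_inj (a a' : Fin m) : (lo a : Fin (2*m+1)) = lo a' ↔ a = a' := by
  constructor
  · intro h; exact Fin.ext (by simpa using congrArg Fin.val h)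
  · rintro rfl; rfl

lemma hi_inj (a a' : Fin m) : (hi a : Fin (2*m+1)) = hi a' ↔ a = a' := by
  constructor
  · intro h
    have := congrArg Fin.val h
    simp only [hi_val] at this
    exact Fin.ext (by omega)
  · rintro rfl; rfl

lemma lo_ne_hi (a a' : Fin m) : (lo a : Fin (2*m+1)) ≠ hi a' := by
  intro h
  have := congrArg Fin.val h
  simp only [lo_val, hi_val] at this
  have := a.isLt
  omega

lemma lo_ne_last (a : Fin m) : (lo a : Fin (2*m+1)) ≠ Fin.last (2*m) := by
  intro h
  have := congrArg Fin.val h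
  simp only [lo_val, Fin.val_last] at this
  have := a.isLt
  omega

lemma hi_ne_last (a : Fin m) : (hi a : Fin (2*m+1)) ≠ Fin.last (2*m) := by
  intro h
  have := congrArg Fin.val h
  simp only [hi_val, Fin.val_last] at this
  have := a.isLt
  omega

include hb in
lemma inner_of (η : LieDerivation F L L)
    (h0 : ∀ i j : Fin (2*m+1), (i:ℕ) < 2*m → b.repr (η (b j)) i = 0)
    (hlast : η (b (Fin.last (2*m))) = 0) :
    ∃ h : L, ∀ g : L, η g = ⁅h, g⁆ := by
  set f1 : Fin m → F := fun a => b.repr (η (b (hi a))) (Fin.last (2*m)) with hf1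
  set f2 : Fin m → F := fun a => b.repr (η (b (lo a))) (Fin.last (2*m)) with hf2
  set h : L := (∑ a, f1 a • b (lo a)) + ∑ a, f2 a • b (hi a) with hh
  refine ⟨h, ?_⟩
  have hrep : ∀ x, b.repr h x
      = (∑ a, (if lo a = x then f1 a else 0)) + ∑ a, (if hi a = x then f2 a else 0) := by
    intro x
    rw [hh, map_add, Finsupp.add_apply, repr_emb_sum F b, repr_emb_sum F b]
  have hbasis : ∀ k, η (b k) = ⁅h, b k⁆ := by
    intro k
    rw [lie_basis_right F b hb k h]
    by_cases h2m : (k:ℕ) < 2*m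
    · have hk : η (b k) = b.repr (η (b k)) (Fin.last (2*m)) • b (Fin.last (2*m)) :=
        eq_last_smul F b (fun i hi => h0 i k hi)
      rw [hk]
      congr 1
      unfold wf
      rw [if_pos h2m]
      rcases lo_or_hi h2m with ⟨a, rfl⟩ | ⟨a, rfl⟩
      · rw [sg_lo, hrep,
          Finset.sum_eq_zero (fun a' _ => if_neg (lo_ne_hi a' a)),
          sum_ite_emb_eq F f2 a hi hi_inj, zero_add]
      · rw [sg_hi, hrep,
          sum_ite_emb_eq F f1 a lo lo_inj,
          Finset.sum_eq_zero (fun a' _ => if_neg (fun hc => lo_ne_hi a a' hc.symm)),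
          add_zero]
    · rw [last_of_not_lt h2m, hlast]
      have : wf F b (Fin.last (2*m)) h = 0 := by
        unfold wf
        rw [if_neg (by simp only [Fin.val_last]; omega)]
      rw [this, zero_smul]
  intro g
  conv_lhs => rw [← b.sum_repr g]
  conv_rhs => rw [← b.sum_repr g]
  rw [map_sum, lieSum]
  exact Finset.sum_congr rfl (fun i _ => by rw [map_smul, hbasis i, lie_smul])

lemma params_zero (hm : 1 ≤ m) (v : VSp F m)
    (hz : ∀ i j : Fin (2*m+1), (i:ℕ) < 2*m → Mv F lam v i j = 0) : v = 0 := by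
  have hP1 : v.1 = 0 := by
    funext a c
    have h1 := hz (lo a) (lo c) (by simp only [lo_val]; have := a.isLt; omega)
    rwa [Mv_PP] at h1
  have hc : v.2.1 = 0 := by
    have h1 := hz (hi ⟨0, hm⟩) (hi ⟨0, hm⟩) (by simp only [hi_val]; omega)
    rw [Mv_SS, if_pos rfl, hP1] at h1
    simpa using h1
  have hr : v.2.2.1 = 0 := by
    funext t
    obtain ⟨j, i⟩ := t
    have hlt : (i:ℕ) < m := lt_trans i.isLt j.isLt
    have h1 := hz (hi ⟨(i:ℕ), hlt⟩) (lo j) (by simp only [hi_val]; omega)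
    rw [Mv_RR] at h1
    unfold symEnt at h1
    rw [dif_pos (show ((⟨(i:ℕ), hlt⟩ : Fin m) : ℕ) < (j:ℕ) from i.isLt)] at h1
    simpa [Fin.eta] using h1
  have hq : v.2.2.2 = 0 := by
    funext t
    obtain ⟨j, i⟩ := t
    have hlt : (i:ℕ) < m := lt_trans i.isLt j.isLt
    have h1 := hz (lo ⟨(i:ℕ), hlt⟩) (hi j) (by simp only [lo_val]; omega)
    rw [Mv_QQ] at h1
    unfold symEnt at h1
    rw [dif_pos (show ((⟨(i:ℕ), hlt⟩ : Fin m) : ℕ) < (j:ℕ) from i.isLt)] at h1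
    simpa [Fin.eta] using h1
  have hv : v = (v.1, v.2.1, v.2.2.1, v.2.2.2) := rfl
  rw [hv, hP1, hc, hr, hq]
  rfl

end Psi
end HeisAux

open HeisAux in
/-- Let `F` be an algebraically closed field of characteristic `2`, let
`m ≥ 1`, and let `λ ∈ F^{2m+1}` with `λ_{2m+1} = 0`.  The restricted `[2]`-map on `h_m`
determined by `λ` is `g^{[2]} = (Σ_i a_i² λ_i + Σ_{j=1}^m a_j a_{m+j}) e_{2m+1}` for
`g = Σ_i a_i e_i`.  Consider the subspace `D_λ` of derivations `ψ` of `h_m` satisfying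
`[g, ψ(g)] = ψ(g^{[2]})` for all `g`; this subspace contains all inner derivations.  Then
`D_λ / Inn(h_m) = H¹_*(h_m^λ(2), h_m^λ(2))` has dimension `2m² − m + 1` over `F`. -/
theorem heisenberg_restricted_H1_dim_char_two_lam_zero
    (F : Type*) [Field F] [IsAlgClosed F] [CharP F 2]
    (m : ℕ) (hm : 1 ≤ m)
    (L : Type*) [LieRing L] [LieAlgebra F L]
    (b : Module.Basis (Fin (2*m+1)) F L)
    (hb : ∀ i j : Fin (2*m+1), ⁅b i, b j⁆ =
      if (j : ℕ) = (i : ℕ) + m ∧ (i : ℕ) < m then b (Fin.last (2*m))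
      else if (i : ℕ) = (j : ℕ) + m ∧ (j : ℕ) < m then - b (Fin.last (2*m))
      else 0)
    (lam : Fin (2*m+1) → F) (hlam : lam (Fin.last (2*m)) = 0)
    (P : L → L)
    (hP : ∀ g : L, P g =
      (∑ i, (b.repr g i)^2 * lam i +
        ∑ j : Fin m, b.repr g ⟨(j : ℕ), by omega⟩ * b.repr g ⟨m + (j : ℕ), by omega⟩) •
      b (Fin.last (2*m)))
    (Dlam : Submodule F (LieDerivation F L L))
    (hD : ∀ ψ : LieDerivation F L L, ψ ∈ Dlam ↔
      ∀ g : L, ⁅g, ψ g⁆ = ψ (P g))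
    (Inn : Submodule F (LieDerivation F L L))
    (hInn : ∀ D : LieDerivation F L L, D ∈ Inn ↔ ∃ h : L, ∀ g : L, D g = ⁅h, g⁆) :
    Inn ≤ Dlam ∧
    Module.finrank F (↥Dlam ⧸ Submodule.comap Dlam.subtype Inn) = 2*m^2 - m + 1 := by
  classical
  have h2F : (2:F) = 0 := by
    have := CharP.cast_eq_zero F 2
    simpa using this
  have hP_eq : ∀ g : L, P g = q0 F b lam g • b (Fin.last (2*m)) := by
    intro g
    rw [hP g]
    congr 1
  have part1 : Inn ≤ Dlam := by
    intro D hDInn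
    obtain ⟨h, hh⟩ := (hInn D).mp hDInn
    rw [hD]
    intro g
    rw [hh g, hh (P g), hP_eq g, lie_eq F b hb h g, lie_smul, lie_smul,
      lie_last_right F b hb, lie_last_right F b hb, smul_zero, smul_zero]
  refine ⟨part1, ?_⟩
  set Inn' := Submodule.comap Dlam.subtype Inn with hInn'def
  have hmem : ∀ v : VSp F m, DvD F b hb lam v ∈ Dlam := by
    intro v
    rw [hD]
    intro g
    rw [DvD_apply, DvD_apply, hP_eq g, map_smul]
    exact psiv_restricted F b hb lam hlam v g
  set Ψ : VSp F m →ₗ[F] ↥Dlam := LinearMap.codRestrict Dlam (PsiD F b hb lam) hmem with hΨdef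
  set θ : VSp F m →ₗ[F] (↥Dlam ⧸ Inn') := Inn'.mkQ.comp Ψ with hθdef
  have hinj : ∀ v, θ v = 0 → v = 0 := by
    intro v hv
    have h1 : Ψ v ∈ Inn' := by
      rw [hθdef] at hv
      exact (Submodule.Quotient.mk_eq_zero _).mp hv
    have h2 : DvD F b hb lam v ∈ Inn := h1
    obtain ⟨h, hh⟩ := (hInn _).mp h2
    apply params_zero F lam hm v
    intro i j h2m
    have h3 : psiv F b lam v (b j) = ⁅h, b j⁆ := hh (b j)
    have h4 := congrArg (fun z => b.repr z i) h3
    rw [repr_psiv] at h4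
    rw [h4, lie_basis_right F b hb, map_smul, Finsupp.smul_apply, b.repr_self,
      Finsupp.single_apply,
      if_neg (fun hc : Fin.last (2*m) = i => by
        rw [← hc] at h2m
        simp only [Fin.val_last] at h2m
        omega), smul_zero]
  have hsurj : Function.Surjective θ := by
    intro x
    obtain ⟨ψs, rfl⟩ := Submodule.Quotient.mk_surjective Inn' x
    set ψ : LieDerivation F L L := (ψs : LieDerivation F L L) with hψdef
    have hψmem := ψs.2
    rw [hD] at hψmem
    have hψ : ∀ g : L, ⁅g, ψ g⁆ = q0 F b lam g • ψ (b (Fin.last (2*m))) := by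
      intro g
      rw [hψmem g, hP_eq g, map_smul]
    refine ⟨vOf F b ψ, ?_⟩
    have : θ (vOf F b ψ) = Submodule.Quotient.mk (Ψ (vOf F b ψ)) := rfl
    rw [this]
    apply (Submodule.Quotient.eq Inn').mpr
    have hcoe : Dlam.subtype (Ψ (vOf F b ψ) - ψs)
        = DvD F b hb lam (vOf F b ψ) - ψ := by
      rw [map_sub]
      rfl
    show Dlam.subtype (Ψ (vOf F b ψ) - ψs) ∈ Inn
    rw [hcoe]
    set η : LieDerivation F L L := DvD F b hb lam (vOf F b ψ) - ψ with hηdef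
    refine (hInn η).mpr (inner_of F b hb η ?_ ?_)
    · intro i j h2m
      have he : η (b j) = psiv F b lam (vOf F b ψ) (b j) - ψ (b j) := by
        rw [hηdef, LieDerivation.sub_apply]
        rfl
      rw [he, map_sub, Finsupp.sub_apply, repr_psiv,
        ← agree F b hb lam hm ψ hψ i j h2m, sub_self]
    · have he : η (b (Fin.last (2*m)))
          = psiv F b lam (vOf F b ψ) (b (Fin.last (2*m))) - ψ (b (Fin.last (2*m))) := by
        rw [hηdef, LieDerivation.sub_apply]
        rfl
      rw [he, psiv_last, R1 F b hb hm ψ]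
      exact sub_eq_zero_of_eq rfl
  have hbij : Function.Bijective θ := by
    constructor
    · rw [← LinearMap.ker_eq_bot]
      exact LinearMap.ker_eq_bot'.mpr hinj
    · exact hsurj
  have e : VSp F m ≃ₗ[F] (↥Dlam ⧸ Inn') := LinearEquiv.ofBijective θ hbij
  rw [← e.finrank_eq]
  -- compute the rank of the parameter space
  have hA : Module.finrank F (Fin m → Fin m → F) = m * m := by
    rw [Module.finrank_pi_fintype F]
    have : ∀ i : Fin m, Module.finrank F (Fin m → F) = m := by
      intro i
      rw [Module.finrank_fintype_fun_eq_card, Fintype.card_fin]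
    simp only [Module.finrank_fintype_fun_eq_card, Fintype.card_fin]
    rw [Finset.sum_const, Finset.card_univ, Fintype.card_fin, smul_eq_mul]
  have hT : Module.finrank F (Tri m → F) = Fintype.card (Tri m) := by
    rw [Module.finrank_fintype_fun_eq_card]
  have hK2 : Fintype.card (Tri m) * 2 = m * (m - 1) := by
    rw [Fintype.card_sigma]
    simp only [Fintype.card_fin]
    rw [Fin.sum_univ_eq_sum_range (fun j => j) m]
    exact Finset.sum_range_id_mul_two m
  rw [Module.finrank_prod, Module.finrank_prod, Module.finrank_prod, hA, hT,
    Module.finrank_self]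
  set K := Fintype.card (Tri m) with hKdef
  have hle : m ≤ 2*m^2 := by nlinarith
  zify [hle, hm] at hK2 ⊢
  linear_combination hK2
end
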